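/- arXiv:2505.23089 — 16 statements merged into one kernel-verified Lean document; each statement's English description precedes it below -/
import Mathlib

section
/- Let (X, G) be a CR-dynamical system and x ∈ X. Then x is an illegal point of (X, G) if and only if there exists a positive integer n such that Gⁿ(x) = ∅. -/
open Set Filter Topology

/-- The n-fold relational composition of `G` (with `G⁰` the diagonal). -/
def relPow {X : Type*} (G : Set (X × X)) : ℕ → Set (X × X)
  | 0 => Set.diagonal X
  | n + 1 => {p : X × X | ∃ z : X, (p.1, z) ∈ relPow G n ∧ (z, p.2) ∈ G}

/-- `s` is a trajectory of `x` in `(X, G)`. -/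
def IsTrajectory {X : Type*} (G : Set (X × X)) (x : X) (s : ℕ → X) : Prop :=
  s 0 = x ∧ ∀ n : ℕ, (s n, s (n + 1)) ∈ G

/-- `x` is a legal point of `(X, G)`. -/
def IsLegal {X : Type*} (G : Set (X × X)) (x : X) : Prop :=
  ∃ s : ℕ → X, IsTrajectory G x s

/-- The set of non-degenerate points of `(X, G)`. -/
def ndDom {X : Type*} (G : Set (X × X)) : Set X := {x : X | ∃ y : X, (x, y) ∈ G}

/-- An entourage of the unique compatible uniformity on a compact Hausdorff space:
a neighbourhood of the diagonal in `X × X`. -/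
def IsEntourage {X : Type*} [TopologicalSpace X] (U : Set (X × X)) : Prop :=
  U ∈ 𝓝ˢ (Set.diagonal X)

/-- `(V,1)`-pseudo-orbit. -/
def IsPO1 {X : Type*} (G V : Set (X × X)) (x : ℕ → X) : Prop :=
  (∀ n : ℕ, x n ∈ ndDom G) ∧ ∀ n : ℕ, ∀ y : X, (x n, y) ∈ G → (y, x (n + 1)) ∈ V

/-- `(V,2)`-pseudo-orbit. -/
def IsPO2 {X : Type*} (G V : Set (X × X)) (x : ℕ → X) : Prop :=
  (∀ n : ℕ, x n ∈ ndDom G) ∧ ∀ n : ℕ, ∃ y : X, (x n, y) ∈ G ∧ (y, x (n + 1)) ∈ V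

/-- The legal point `y` `(U,1)`-shadows the sequence `x`. -/
def Shadows1 {X : Type*} (G U : Set (X × X)) (y : X) (x : ℕ → X) : Prop :=
  IsLegal G y ∧ ∀ s : ℕ → X, IsTrajectory G y s → ∀ n : ℕ, (s n, x n) ∈ U

/-- The point `y` `(U,2)`-shadows the sequence `x`. -/
def Shadows2 {X : Type*} (G U : Set (X × X)) (y : X) (x : ℕ → X) : Prop :=
  ∃ s : ℕ → X, IsTrajectory G y s ∧ ∀ n : ℕ, (s n, x n) ∈ U

/-- The `(1,1)`-shadowing property. -/
def Shadowing11 {X : Type*} [TopologicalSpace X] (G : Set (X × X)) : Prop :=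
  ∀ U : Set (X × X), IsEntourage U → ∃ V : Set (X × X), IsEntourage V ∧
    ∀ x : ℕ → X, IsPO1 G V x → ∃ y : X, Shadows1 G U y x

/-- The `(1,2)`-shadowing property. -/
def Shadowing12 {X : Type*} [TopologicalSpace X] (G : Set (X × X)) : Prop :=
  ∀ U : Set (X × X), IsEntourage U → ∃ V : Set (X × X), IsEntourage V ∧
    ∀ x : ℕ → X, IsPO1 G V x → ∃ y : X, Shadows2 G U y x

/-- The `(2,1)`-shadowing property. -/
def Shadowing21 {X : Type*} [TopologicalSpace X] (G : Set (X × X)) : Prop :=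
  ∀ U : Set (X × X), IsEntourage U → ∃ V : Set (X × X), IsEntourage V ∧
    ∀ x : ℕ → X, IsPO2 G V x → ∃ y : X, Shadows1 G U y x

/-- The `(2,2)`-shadowing property. -/
def Shadowing22 {X : Type*} [TopologicalSpace X] (G : Set (X × X)) : Prop :=
  ∀ U : Set (X × X), IsEntourage U → ∃ V : Set (X × X), IsEntourage V ∧
    ∀ x : ℕ → X, IsPO2 G V x → ∃ y : X, Shadows2 G U y x


lemma relPow_chain {X : Type*} (G : Set (X × X)) :
    ∀ n : ℕ, ∀ x y : X, (x, y) ∈ relPow G n →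
      ∃ s : ℕ → X, s 0 = x ∧ s n = y ∧ ∀ k < n, (s k, s (k + 1)) ∈ G := by
  intro n
  induction n with
  | zero => intro x y h; exact ⟨fun _ => x, rfl, h, fun k hk => absurd hk (Nat.not_lt_zero k)⟩
  | succ n ih =>
    intro x y h
    obtain ⟨z, hz, hzy⟩ := h
    obtain ⟨s, hs0, hsn, hstep⟩ := ih x z hz
    refine ⟨fun k => if k ≤ n then s k else y, by simp [hs0], by simp, ?_⟩
    intro k hk
    rcases Nat.lt_succ_iff_lt_or_eq.mp hk with hk' | rfl
    · simp only [Nat.le_of_lt hk', if_pos, Nat.succ_le_of_lt hk']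
      exact hstep k hk'
    · simp only [le_refl, if_pos, Nat.not_le.mpr (Nat.lt_succ_self k), if_neg]
      rw [hsn]; exact hzy

lemma traj_relPow {X : Type*} (G : Set (X × X)) {x : X} {s : ℕ → X}
    (hs : IsTrajectory G x s) : ∀ n : ℕ, (x, s n) ∈ relPow G n := by
  intro n
  induction n with
  | zero => exact hs.1.symm
  | succ n ih => exact ⟨s n, ih, hs.2 n⟩

/-- x is illegal iff Gⁿ(x) = ∅ for some positive n. -/
theorem stmt_0 {X : Type*} [TopologicalSpace X] [CompactSpace X] [T2Space X] [Nonempty X]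
    (G : Set (X × X)) (hGclosed : IsClosed G) (hGne : G.Nonempty) (x : X) :
    ¬ IsLegal G x ↔ ∃ n : ℕ, 1 ≤ n ∧ {y : X | (x, y) ∈ relPow G n} = ∅ := by
  constructor
  · intro hleg
    by_contra h'
    push_neg at h'
    -- every relPow G n (x) is nonempty
    have hne : ∀ n : ℕ, ∃ y : X, (x, y) ∈ relPow G n := by
      intro n
      cases n with
      | zero => exact ⟨x, rfl⟩
      | succ n =>
        obtain ⟨y, hy⟩ := h' (n + 1) (Nat.succ_le_succ (Nat.zero_le n))
        exact ⟨y, hy⟩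
    set t : ℕ → Set (ℕ → X) := fun n => {s | s 0 = x ∧ ∀ k < n, (s k, s (k + 1)) ∈ G} with ht
    have htclosed : ∀ n, IsClosed (t n) := by
      intro n
      have h1 : IsClosed {s : ℕ → X | s 0 = x} :=
        isClosed_eq (continuous_apply 0) continuous_const
      have h2 : ∀ k : ℕ, IsClosed {s : ℕ → X | (s k, s (k + 1)) ∈ G} :=
        fun k => hGclosed.preimage ((continuous_apply k).prodMk (continuous_apply (k + 1)))
      have : t n = {s : ℕ → X | s 0 = x} ∩ ⋂ k ∈ Set.Iio n, {s : ℕ → X | (s k, s (k + 1)) ∈ G} := by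
        ext s
        simp only [ht, Set.mem_setOf_eq, Set.mem_inter_iff, Set.mem_iInter, Set.mem_Iio]
      rw [this]
      exact h1.inter (isClosed_biInter fun k _ => h2 k)
    have htne : ∀ n, (t n).Nonempty := by
      intro n
      obtain ⟨y, hy⟩ := hne n
      obtain ⟨s, hs0, _, hstep⟩ := relPow_chain G n x y hy
      exact ⟨s, hs0, hstep⟩
    have htdec : ∀ n, t (n + 1) ⊆ t n := by
      intro n s hs
      exact ⟨hs.1, fun k hk => hs.2 k (hk.trans (Nat.lt_succ_self n))⟩
    have hcompact : IsCompact (t 0) := (htclosed 0).isCompact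
    have hinter : (⋂ n, t n).Nonempty :=
      IsCompact.nonempty_iInter_of_sequence_nonempty_isCompact_isClosed t htdec htne hcompact htclosed
    obtain ⟨s, hs⟩ := hinter
    simp only [Set.mem_iInter] at hs
    refine hleg ⟨s, (hs 0).1, fun n => (hs (n + 1)).2 n (Nat.lt_succ_self n)⟩
  · rintro ⟨n, hn, hempty⟩ ⟨s, hs⟩
    have : s n ∈ {y : X | (x, y) ∈ relPow G n} := traj_relPow G hs n
    rw [hempty] at this
    exact this
end

section
/- Suppose (X, G) and (Y, H) are CR-dynamical systems and φ : X → Y is a homeomorphism such that (x, y) ∈ G if and only if (φ(x), φ(y)) ∈ H. Then for each i, j ∈ {1,2}, if (X, G) has the (i, j)-shadowing property, then (Y, H) has the (i, j)-shadowing property. -/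
open Set Filter Topology

lemma entourage_preimage {X Y : Type*} [TopologicalSpace X] [TopologicalSpace Y]
    (ψ : X ≃ₜ Y) {U : Set (Y × Y)} (h : IsEntourage U) :
    IsEntourage (Prod.map ψ ψ ⁻¹' U) := by
  rw [IsEntourage, mem_nhdsSet_iff_forall] at h ⊢
  rintro ⟨a, b⟩ hab
  have hab' : a = b := hab
  subst hab'
  have hc : Continuous (Prod.map ψ ψ) := (ψ.continuous.comp continuous_fst).prodMk
    (ψ.continuous.comp continuous_snd)
  exact hc.continuousAt.preimage_mem_nhds (h (ψ a, ψ a) rfl)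

/-- the (i,j)-shadowing properties are invariant under topological conjugacy. -/
theorem stmt_1 {X Y : Type*}
    [TopologicalSpace X] [CompactSpace X] [T2Space X] [Nonempty X]
    [TopologicalSpace Y] [CompactSpace Y] [T2Space Y] [Nonempty Y]
    (G : Set (X × X)) (hGclosed : IsClosed G) (hGne : G.Nonempty)
    (hGpow : ∀ n : ℕ, 1 ≤ n → (relPow G n).Nonempty)
    (H : Set (Y × Y)) (hHclosed : IsClosed H) (hHne : H.Nonempty)
    (hHpow : ∀ n : ℕ, 1 ≤ n → (relPow H n).Nonempty)
    (φ : X ≃ₜ Y) (hconj : ∀ a b : X, (a, b) ∈ G ↔ (φ a, φ b) ∈ H) :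
    (Shadowing11 G → Shadowing11 H) ∧ (Shadowing12 G → Shadowing12 H) ∧
      (Shadowing21 G → Shadowing21 H) ∧ (Shadowing22 G → Shadowing22 H) := by
  constructor
  · intro hX U hU
    obtain ⟨V, hV, hsh⟩ := hX (Prod.map φ φ ⁻¹' U) (entourage_preimage φ hU)
    refine ⟨Prod.map φ.symm φ.symm ⁻¹' V, entourage_preimage φ.symm hV, ?_⟩
    intro x hx
    obtain ⟨y, hyleg, hysh⟩ := hsh (fun n => φ.symm (x n)) ⟨fun n => by
      obtain ⟨z, hz⟩ := hx.1 n
      exact ⟨φ.symm z, by simpa [hconj] using hz⟩,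
      fun n y' hy' => by
        have := hx.2 n (φ y') (by simpa [hconj] using hy')
        simpa using this⟩
    obtain ⟨s, hs⟩ := hyleg
    refine ⟨φ y, ⟨fun n => φ (s n), by simp [IsTrajectory, hs.1, ← hconj, hs.2]⟩, ?_⟩
    intro t ht n
    have := hysh (fun n => φ.symm (t n)) ⟨by simp [ht.1], fun n => by
      simpa [hconj] using ht.2 n⟩ n
    simpa using this
  refine ⟨?_, ?_, ?_⟩
  · intro hX U hU
    obtain ⟨V, hV, hsh⟩ := hX (Prod.map φ φ ⁻¹' U) (entourage_preimage φ hU)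
    refine ⟨Prod.map φ.symm φ.symm ⁻¹' V, entourage_preimage φ.symm hV, ?_⟩
    intro x hx
    obtain ⟨y, s, hs, hsU⟩ := hsh (fun n => φ.symm (x n)) ⟨fun n => by
      obtain ⟨z, hz⟩ := hx.1 n
      exact ⟨φ.symm z, by simpa [hconj] using hz⟩,
      fun n y' hy' => by
        have := hx.2 n (φ y') (by simpa [hconj] using hy')
        simpa using this⟩
    refine ⟨φ y, fun n => φ (s n), by simp [IsTrajectory, hs.1, ← hconj, hs.2], fun n => by
      simpa using hsU n⟩
  · intro hX U hU
    obtain ⟨V, hV, hsh⟩ := hX (Prod.map φ φ ⁻¹' U) (entourage_preimage φ hU)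
    refine ⟨Prod.map φ.symm φ.symm ⁻¹' V, entourage_preimage φ.symm hV, ?_⟩
    intro x hx
    obtain ⟨y, hyleg, hysh⟩ := hsh (fun n => φ.symm (x n)) ⟨fun n => by
      obtain ⟨z, hz⟩ := hx.1 n
      exact ⟨φ.symm z, by simpa [hconj] using hz⟩,
      fun n => by
        obtain ⟨z, hz1, hz2⟩ := hx.2 n
        exact ⟨φ.symm z, by simpa [hconj] using hz1, by simpa using hz2⟩⟩
    obtain ⟨s, hs⟩ := hyleg
    refine ⟨φ y, ⟨fun n => φ (s n), by simp [IsTrajectory, hs.1, ← hconj, hs.2]⟩, ?_⟩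
    intro t ht n
    have := hysh (fun n => φ.symm (t n)) ⟨by simp [ht.1], fun n => by
      simpa [hconj] using ht.2 n⟩ n
    simpa using this
  · intro hX U hU
    obtain ⟨V, hV, hsh⟩ := hX (Prod.map φ φ ⁻¹' U) (entourage_preimage φ hU)
    refine ⟨Prod.map φ.symm φ.symm ⁻¹' V, entourage_preimage φ.symm hV, ?_⟩
    intro x hx
    obtain ⟨y, s, hs, hsU⟩ := hsh (fun n => φ.symm (x n)) ⟨fun n => by
      obtain ⟨z, hz⟩ := hx.1 n
      exact ⟨φ.symm z, by simpa [hconj] using hz⟩,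
      fun n => by
        obtain ⟨z, hz1, hz2⟩ := hx.2 n
        exact ⟨φ.symm z, by simpa [hconj] using hz1, by simpa using hz2⟩⟩
    refine ⟨φ y, fun n => φ (s n), by simp [IsTrajectory, hs.1, ← hconj, hs.2], fun n => by
      simpa using hsU n⟩
end

section
/- Suppose (X, G) and (X, H) are CR-dynamical systems on the same space X such that G ⊆ H and Dom(G) = Dom(H). If (X, G) has the (1,2)-shadowing property, then (X, H) has the (1,2)-shadowing property. -/
open Set Filter Topology

/-- extension lemma for the (1,2)-shadowing property. -/
theorem stmt_3 {X : Type*} [TopologicalSpace X] [CompactSpace X] [T2Space X] [Nonempty X]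
    (G H : Set (X × X))
    (hGclosed : IsClosed G) (hGne : G.Nonempty)
    (hGpow : ∀ n : ℕ, 1 ≤ n → (relPow G n).Nonempty)
    (hHclosed : IsClosed H) (hHne : H.Nonempty)
    (hHpow : ∀ n : ℕ, 1 ≤ n → (relPow H n).Nonempty)
    (hsub : G ⊆ H) (hdom : ndDom G = ndDom H)
    (hshad : Shadowing12 G) :
    Shadowing12 H := by
  intro U hU
  obtain ⟨V, hV, hVsh⟩ := hshad U hU
  refine ⟨V, hV, fun x hx => ?_⟩
  obtain ⟨y, s, hs, hsh⟩ :=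
    hVsh x ⟨fun n => hdom.symm ▸ hx.1 n, fun n z hz => hx.2 n z (hsub hz)⟩
  exact ⟨y, s, ⟨hs.1, fun n => hsub (hs.2 n)⟩, hsh⟩
end

section
/- Suppose (X, G) and (X, H) are CR-dynamical systems on the same space X such that G ⊆ H and the set of legal points of (X, G) equals the set of legal points of (X, H). If (X, H) has the (2,1)-shadowing property, then (X, G) has the (2,1)-shadowing property. -/
open Set Filter Topology

/-- contraction lemma for the (2,1)-shadowing property. -/
theorem stmt_4 {X : Type*} [TopologicalSpace X] [CompactSpace X] [T2Space X] [Nonempty X]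
    (G H : Set (X × X))
    (hGclosed : IsClosed G) (hGne : G.Nonempty)
    (hGpow : ∀ n : ℕ, 1 ≤ n → (relPow G n).Nonempty)
    (hHclosed : IsClosed H) (hHne : H.Nonempty)
    (hHpow : ∀ n : ℕ, 1 ≤ n → (relPow H n).Nonempty)
    (hsub : G ⊆ H) (hlegal : {x : X | IsLegal G x} = {x : X | IsLegal H x})
    (hshad : Shadowing21 H) :
    Shadowing21 G := by
  intro U hU
  obtain ⟨V, hV, hVs⟩ := hshad U hU
  refine ⟨V, hV, ?_⟩
  rintro x ⟨hnd, hpo⟩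
  obtain ⟨y, hyleg, hysh⟩ := hVs x
    ⟨fun n => (hnd n).imp fun z hz => hsub hz,
     fun n => (hpo n).imp fun z h => ⟨hsub h.1, h.2⟩⟩
  refine ⟨y, ?_, ?_⟩
  · have : y ∈ {x | IsLegal H x} := hyleg
    rw [← hlegal] at this; exact this
  · intro s hs n
    exact hysh s ⟨hs.1, fun m => hsub (hs.2 m)⟩ n
end

section
/- Let (X, G) be a CR-dynamical system and j ∈ {1,2}. Then (X, G) has the (2, j)-shadowing property if and only if (X, Gᵏ) has the (2, j)-shadowing property for every positive integer k. -/
open Set Filter Topology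

section Aux

variable {X : Type*}

lemma relPow_one' (G : Set (X × X)) : relPow G 1 = G := by
  ext ⟨a, b⟩
  constructor
  · rintro ⟨z, hz1, hz2⟩
    have : a = z := hz1
    rwa [this]
  · intro h
    exact ⟨a, rfl, h⟩

lemma mem_relPow_iff (G : Set (X × X)) (k : ℕ) (x y : X) :
    (x, y) ∈ relPow G k ↔
      ∃ c : ℕ → X, c 0 = x ∧ c k = y ∧ ∀ i < k, (c i, c (i + 1)) ∈ G := by
  induction k generalizing y with
  | zero =>
    constructor
    · intro h
      have : x = y := h
      exact ⟨fun _ => x, rfl, this ▸ rfl, by omega⟩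
    · rintro ⟨c, h0, hk, _⟩
      show x = y
      rw [← h0, ← hk]
  | succ k ih =>
    constructor
    · rintro ⟨z, hz1, hz2⟩
      obtain ⟨c, h0, hk, hs⟩ := (ih z).mp hz1
      refine ⟨fun i => if i ≤ k then c i else y, by simp [h0], by simp, ?_⟩
      intro i hi
      rcases Nat.lt_or_ge i k with h | h
      · simpa [Nat.le_of_lt h, Nat.succ_le_of_lt h] using hs i h
      · have hik : i = k := by omega
        subst hik
        have h1 : ¬ (i + 1 ≤ i) := by omega
        simpa [h1, hk] using hz2
    · rintro ⟨c, h0, hk, hs⟩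
      refine ⟨c k, (ih (c k)).mpr ⟨c, h0, rfl, fun i hi => hs i (by omega)⟩, ?_⟩
      have := hs k (by omega)
      rwa [hk] at this

lemma IsEntourage.diag {V : Set (X × X)} [TopologicalSpace X] (h : IsEntourage V) (a : X) :
    (a, a) ∈ V :=
  subset_of_mem_nhdsSet h rfl

lemma succ_div_mod {k : ℕ} (hk : 0 < k) (m : ℕ) :
    (m % k + 1 < k ∧ (m + 1) / k = m / k ∧ (m + 1) % k = m % k + 1) ∨
    (m % k + 1 = k ∧ (m + 1) / k = m / k + 1 ∧ (m + 1) % k = 0) := by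
  have h1 : m % k < k := Nat.mod_lt _ hk
  have h2 := Nat.div_add_mod m k
  by_cases h : m % k + 1 < k
  · left
    have hm : m + 1 = (m % k + 1) + k * (m / k) := by omega
    refine ⟨h, ?_, ?_⟩
    · rw [hm, Nat.add_mul_div_left _ _ hk, Nat.div_eq_of_lt h, Nat.zero_add]
    · rw [hm, Nat.add_mul_mod_self_left, Nat.mod_eq_of_lt h]
  · right
    have hke : m % k + 1 = k := by omega
    have hmul : k * (m / k + 1) = k * (m / k) + k := Nat.mul_succ k (m / k)
    have hm : m + 1 = k * (m / k + 1) := by omega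
    exact ⟨hke, by rw [hm, Nat.mul_div_cancel_left _ hk], by rw [hm, Nat.mul_mod_right]⟩

lemma glue_mul {k : ℕ} (hk : 0 < k) (c : ℕ → ℕ → X) (n : ℕ) :
    c ((n * k) / k) ((n * k) % k) = c n 0 := by
  rw [Nat.mul_div_cancel _ hk, Nat.mul_mod_left]

/-- Sampling a `G`-trajectory gives a `relPow G k`-step. -/
lemma sample_step (G : Set (X × X)) {k : ℕ} (s : ℕ → X)
    (hs : ∀ n, (s n, s (n + 1)) ∈ G) (n : ℕ) :
    (s (n * k), s ((n + 1) * k)) ∈ relPow G k := by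
  refine (mem_relPow_iff G k _ _).mpr ⟨fun i => s (n * k + i), rfl, by show s (n * k + k) = s ((n + 1) * k); rw [Nat.succ_mul], ?_⟩
  intro i _
  exact hs _

/-- Gluing chains gives a `G`-trajectory. -/
lemma glue_step (G : Set (X × X)) {k : ℕ} (hk : 0 < k) (d : ℕ → ℕ → X)
    (hcons : ∀ n, d n k = d (n + 1) 0)
    (hstep : ∀ n, ∀ i < k, (d n i, d n (i + 1)) ∈ G) (m : ℕ) :
    (d (m / k) (m % k), d ((m + 1) / k) ((m + 1) % k)) ∈ G := by
  rcases succ_div_mod hk m with ⟨h1, h2, h3⟩ | ⟨h1, h2, h3⟩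
  · rw [h2, h3]
    exact hstep _ _ (by omega)
  · rw [h2, h3]
    have := hstep (m / k) (m % k) (by omega)
    rwa [h1, hcons] at this

lemma legal_pow (G : Set (X × X)) {k : ℕ} (hk : 0 < k) {y : X} (h : IsLegal G y) :
    IsLegal (relPow G k) y := by
  obtain ⟨s, hs0, hs⟩ := h
  exact ⟨fun n => s (n * k), by simpa using hs0, fun n => sample_step G s hs n⟩

/-- A `relPow G k` trajectory extends to a `G`-trajectory agreeing at multiples of `k`. -/
lemma traj_extend (G : Set (X × X)) {k : ℕ} (hk : 0 < k) {y : X} (t : ℕ → X)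
    (ht : IsTrajectory (relPow G k) y t) :
    ∃ s : ℕ → X, IsTrajectory G y s ∧ ∀ n, s (n * k) = t n := by
  have hch : ∀ n, ∃ c : ℕ → X, c 0 = t n ∧ c k = t (n + 1) ∧ ∀ i < k, (c i, c (i + 1)) ∈ G :=
    fun n => (mem_relPow_iff G k _ _).mp (ht.2 n)
  choose c hc0 hck hcs using hch
  -- adjust so that consistency holds definitionally
  refine ⟨fun m => c (m / k) (m % k), ⟨?_, ?_⟩, ?_⟩
  · simp only [Nat.zero_div, Nat.zero_mod, hc0]
    exact ht.1
  · intro m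
    exact glue_step G hk c (fun n => by rw [hck, hc0]) hcs m
  · intro n
    show c (n * k / k) (n * k % k) = t n
    rw [glue_mul hk c n, hc0]

end Aux

section Main

variable {X : Type*} [TopologicalSpace X]

lemma po2_interp (G V : Set (X × X)) (hV : IsEntourage V) {k : ℕ} (hk : 0 < k)
    (x : ℕ → X) (hx : IsPO2 (relPow G k) V x) :
    ∃ z : ℕ → X, IsPO2 G V z ∧ ∀ n, z (n * k) = x n := by
  obtain ⟨hdom, hstep⟩ := hx
  choose y hy1 hy2 using hstep
  have hch : ∀ n, ∃ c : ℕ → X, c 0 = x n ∧ c k = y n ∧ ∀ i < k, (c i, c (i + 1)) ∈ G :=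
    fun n => (mem_relPow_iff G k _ _).mp (hy1 n)
  choose c hc0 hck hcs using hch
  refine ⟨fun m => c (m / k) (m % k), ⟨?_, ?_⟩, fun n => by show c (n * k / k) (n * k % k) = x n; rw [glue_mul hk c n, hc0]⟩
  · intro m
    exact ⟨c (m / k) (m % k + 1), hcs _ _ (Nat.mod_lt _ hk)⟩
  · intro m
    rcases succ_div_mod hk m with ⟨h1, h2, h3⟩ | ⟨h1, h2, h3⟩
    · refine ⟨c (m / k) (m % k + 1), hcs _ _ (by omega), ?_⟩
      show (c (m / k) (m % k + 1), c ((m + 1) / k) ((m + 1) % k)) ∈ V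
      rw [h2, h3]
      exact hV.diag _
    · refine ⟨y (m / k), ?_, ?_⟩
      · have := hcs (m / k) (m % k) (by omega)
        rwa [h1, hck] at this
      · show (y (m / k), c ((m + 1) / k) ((m + 1) % k)) ∈ V
        rw [h2, h3, hc0]
        exact hy2 _

lemma shadowing21_pow (G : Set (X × X)) {k : ℕ} (hk : 0 < k) (h : Shadowing21 G) :
    Shadowing21 (relPow G k) := by
  intro U hU
  obtain ⟨V, hV, hVs⟩ := h U hU
  refine ⟨V, hV, ?_⟩
  intro x hx
  obtain ⟨z, hz, hzx⟩ := po2_interp G V hV hk x hx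
  obtain ⟨w, hwl, hws⟩ := hVs z hz
  refine ⟨w, legal_pow G hk hwl, ?_⟩
  intro t ht n
  obtain ⟨s, hst, hsk⟩ := traj_extend G hk t ht
  have := hws s hst (n * k)
  rwa [hsk, hzx] at this

lemma shadowing22_pow (G : Set (X × X)) {k : ℕ} (hk : 0 < k) (h : Shadowing22 G) :
    Shadowing22 (relPow G k) := by
  intro U hU
  obtain ⟨V, hV, hVs⟩ := h U hU
  refine ⟨V, hV, ?_⟩
  intro x hx
  obtain ⟨z, hz, hzx⟩ := po2_interp G V hV hk x hx
  obtain ⟨w, s, ⟨hs0, hs⟩, hws⟩ := hVs z hz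
  refine ⟨w, fun n => s (n * k), ⟨by simpa using hs0, fun n => sample_step G s hs n⟩, ?_⟩
  intro n
  have := hws (n * k)
  rwa [hzx] at this

end Main

/-- (X,G) has the (2,j)-shadowing property iff (X,Gᵏ) does for all k ≥ 1. -/
theorem stmt_6 {X : Type*} [TopologicalSpace X] [CompactSpace X] [T2Space X] [Nonempty X]
    (G : Set (X × X)) (hGclosed : IsClosed G) (hGne : G.Nonempty)
    (hGpow : ∀ n : ℕ, 1 ≤ n → (relPow G n).Nonempty) :
    (Shadowing21 G ↔ ∀ k : ℕ, 1 ≤ k → Shadowing21 (relPow G k)) ∧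
      (Shadowing22 G ↔ ∀ k : ℕ, 1 ≤ k → Shadowing22 (relPow G k)) := by
  constructor
  · constructor
    · intro h k hk
      exact shadowing21_pow G hk h
    · intro h
      have := h 1 le_rfl
      rwa [relPow_one'] at this
  · constructor
    · intro h k hk
      exact shadowing22_pow G hk h
    · intro h
      have := h 1 le_rfl
      rwa [relPow_one'] at this
end

section
/- Let (X, G) be a CR-dynamical system. If Dom(G), the set of non-degenerate points of (X, G), is finite, then (X, G) has the (1,1)-shadowing property, the (2,2)-shadowing property, and the (1,2)-shadowing property. -/
open Set Filter Topology

/-- if Dom(G) is finite then (X,G) has the (1,1)-, (2,2)- and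
(1,2)-shadowing properties. -/
theorem stmt_8 {X : Type*} [TopologicalSpace X] [CompactSpace X] [T2Space X] [Nonempty X]
    (G : Set (X × X)) (hGclosed : IsClosed G) (hGne : G.Nonempty)
    (hGpow : ∀ n : ℕ, 1 ≤ n → (relPow G n).Nonempty)
    (hfin : (ndDom G).Finite) :
    Shadowing11 G ∧ Shadowing22 G ∧ Shadowing12 G := by
  classical
  have hslice : ∀ a : X, IsClosed {y : X | (a, y) ∈ G} := fun a =>
    hGclosed.preimage (Continuous.prodMk_right a)
  set B1 : Set (X × X) :=
    ⋃ a ∈ ndDom G, ⋃ b ∈ ndDom G,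
      {p : X × X | (a, p.1) ∈ G ∧ p.2 = b ∧ (a, b) ∉ G} with hB1def
  set B2 : Set (X × X) :=
    ⋃ a ∈ ndDom G, ⋃ b ∈ ndDom G, {p : X × X | p = (a, b) ∧ a ≠ b} with hB2def
  have hB1closed : IsClosed B1 := by
    refine hfin.isClosed_biUnion fun a _ => hfin.isClosed_biUnion fun b _ => ?_
    by_cases h : (a, b) ∈ G
    · have : {p : X × X | (a, p.1) ∈ G ∧ p.2 = b ∧ (a, b) ∉ G} = ∅ := by
        ext p; simp [h]
      rw [this]; exact isClosed_empty
    · have : {p : X × X | (a, p.1) ∈ G ∧ p.2 = b ∧ (a, b) ∉ G}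
          = {y : X | (a, y) ∈ G} ×ˢ ({b} : Set X) := by
        ext ⟨y, z⟩
        simp only [Set.mem_setOf_eq, Set.mem_prod, Set.mem_singleton_iff, h,
          not_false_iff, and_true]
      rw [this]; exact (hslice a).prod isClosed_singleton
  have hB2closed : IsClosed B2 := by
    refine hfin.isClosed_biUnion fun a _ => hfin.isClosed_biUnion fun b _ => ?_
    by_cases h : a = b
    · have : {p : X × X | p = (a, b) ∧ a ≠ b} = ∅ := by ext p; simp [h]
      rw [this]; exact isClosed_empty
    · have : {p : X × X | p = (a, b) ∧ a ≠ b} = {(a, b)} := by ext p; simp [h]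
      rw [this]; exact isClosed_singleton
  set V : Set (X × X) := (B1 ∪ B2)ᶜ with hVdef
  have hVopen : IsOpen V := (hB1closed.union hB2closed).isOpen_compl
  have hΔV : Set.diagonal X ⊆ V := by
    rintro ⟨x, y⟩ hxy
    have hxy' : x = y := hxy
    subst hxy'
    intro hmem
    rcases hmem with h | h
    · simp only [hB1def, Set.mem_iUnion] at h
      obtain ⟨a, _, b, _, h1, h2, h3⟩ := h
      exact h3 (h2 ▸ h1)
    · simp only [hB2def, Set.mem_iUnion] at h
      obtain ⟨a, _, b, _, h1, h2⟩ := h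
      have : a = b := by
        have := congrArg Prod.fst h1
        have := congrArg Prod.snd h1
        simp_all
      exact h2 this
  have hVent : IsEntourage V := hVopen.mem_nhdsSet.mpr hΔV
  have hP1 : ∀ a b y : X, a ∈ ndDom G → b ∈ ndDom G → (a, y) ∈ G → (y, b) ∈ V →
      (a, b) ∈ G := by
    intro a b y ha hb hay hyb
    by_contra h
    exact hyb (Or.inl (by
      simp only [hB1def, Set.mem_iUnion]
      exact ⟨a, ha, b, hb, hay, rfl, h⟩))
  have hP2 : ∀ a b : X, a ∈ ndDom G → b ∈ ndDom G → (a, b) ∈ V → a = b := by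
    intro a b ha hb hab
    by_contra h
    exact hab (Or.inr (by
      simp only [hB2def, Set.mem_iUnion]
      exact ⟨a, ha, b, hb, rfl, h⟩))
  have hΔU : ∀ U : Set (X × X), IsEntourage U → ∀ x : X, (x, x) ∈ U := by
    intro U hU x
    exact subset_of_mem_nhdsSet hU rfl
  -- a (V,·)-pseudo-orbit is an actual trajectory
  have htraj1 : ∀ x : ℕ → X, IsPO1 G V x → ∀ n : ℕ, (x n, x (n + 1)) ∈ G := by
    rintro x ⟨hdom, hpo⟩ n
    obtain ⟨y, hy⟩ := hdom n
    exact hP1 _ _ y (hdom n) (hdom (n + 1)) hy (hpo n y hy)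
  have htraj2 : ∀ x : ℕ → X, IsPO2 G V x → ∀ n : ℕ, (x n, x (n + 1)) ∈ G := by
    rintro x ⟨hdom, hpo⟩ n
    obtain ⟨y, hy, hyv⟩ := hpo n
    exact hP1 _ _ y (hdom n) (hdom (n + 1)) hy hyv
  refine ⟨?_, ?_, ?_⟩
  · -- Shadowing11
    intro U hU
    refine ⟨V, hVent, fun x hx => ?_⟩
    have hxt : ∀ n : ℕ, (x n, x (n + 1)) ∈ G := htraj1 x hx
    obtain ⟨hdom, hpo⟩ := hx
    refine ⟨x 0, ⟨x, rfl, hxt⟩, ?_⟩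
    rintro s ⟨hs0, hst⟩ n
    have heq : ∀ m : ℕ, s m = x m := by
      intro m
      induction m with
      | zero => exact hs0
      | succ k ih =>
        have h1 : (x k, s (k + 1)) ∈ G := ih ▸ hst k
        have h2 : (s (k + 1), x (k + 1)) ∈ V := hpo k _ h1
        have h3 : s (k + 1) ∈ ndDom G := ⟨s (k + 2), hst (k + 1)⟩
        exact hP2 _ _ h3 (hdom (k + 1)) h2
    rw [heq n]
    exact hΔU U hU (x n)
  · -- Shadowing22
    intro U hU
    refine ⟨V, hVent, fun x hx => ?_⟩
    exact ⟨x 0, x, ⟨rfl, htraj2 x hx⟩, fun n => hΔU U hU (x n)⟩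
  · -- Shadowing12
    intro U hU
    refine ⟨V, hVent, fun x hx => ?_⟩
    exact ⟨x 0, x, ⟨rfl, htraj1 x hx⟩, fun n => hΔU U hU (x n)⟩
end

section
/- Let (X, G) be a CR-dynamical system with Dom(G) finite. Then (X, G) has the (2,1)-shadowing property if and only if every legal point of (X, G) has exactly one trajectory. -/
open Set Filter Topology

/-- with Dom(G) finite, (X,G) has the (2,1)-shadowing property iff
every legal point has exactly one trajectory. -/
theorem stmt_9 {X : Type*} [TopologicalSpace X] [CompactSpace X] [T2Space X] [Nonempty X]
    (G : Set (X × X)) (hGclosed : IsClosed G) (hGne : G.Nonempty)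
    (hGpow : ∀ n : ℕ, 1 ≤ n → (relPow G n).Nonempty)
    (hfin : (ndDom G).Finite) :
    Shadowing21 G ↔ ∀ x : X, IsLegal G x → ∃! s : ℕ → X, IsTrajectory G x s := by
  constructor
  · intro hsh x hx
    obtain ⟨s, hs⟩ := hx
    refine ⟨s, hs, ?_⟩
    intro t ht
    -- entourage separating distinct points of Dom(G)
    set D : Set (X × X) := {p | p.1 ∈ ndDom G ∧ p.2 ∈ ndDom G ∧ p.1 ≠ p.2} with hD
    have hDfin : D.Finite := (hfin.prod hfin).subset (fun p hp => ⟨hp.1, hp.2.1⟩)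
    have hU : IsEntourage Dᶜ := by
      apply hDfin.isClosed.isOpen_compl.mem_nhdsSet.mpr
      rintro ⟨a, b⟩ hab
      have hab' : a = b := hab
      intro hmem
      exact hmem.2.2 hab'
    obtain ⟨V, hV, hVsh⟩ := hsh Dᶜ hU
    have hdiagV : Set.diagonal X ⊆ V := subset_of_mem_nhdsSet hV
    have hsPO : IsPO2 G V s := by
      refine ⟨fun n => ⟨s (n + 1), hs.2 n⟩, fun n => ⟨s (n + 1), hs.2 n, hdiagV rfl⟩⟩
    obtain ⟨y, hyleg, hysh⟩ := hVsh s hsPO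
    obtain ⟨r, hr⟩ := hyleg
    have heq : ∀ (u : ℕ → X), IsTrajectory G y u → ∀ n, u n = s n := by
      intro u hu n
      have h1 : u n ∈ ndDom G := ⟨u (n + 1), hu.2 n⟩
      have h2 : s n ∈ ndDom G := ⟨s (n + 1), hs.2 n⟩
      have := hysh u hu n
      by_contra hne
      exact this ⟨h1, h2, hne⟩
    have hy : y = x := by
      have := heq r hr 0
      rw [hr.1] at this
      rw [this, hs.1]
    subst hy
    funext n
    exact heq t ht n
  · intro huniq U hU
    -- V := complement of ⋃ over bad pairs of G(a) × {b}
    set Bad : Set (X × X) := {q | q.1 ∈ ndDom G ∧ q.2 ∈ ndDom G ∧ q ∉ G} with hBad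
    have hBfin : Bad.Finite := (hfin.prod hfin).subset (fun q hq => ⟨hq.1, hq.2.1⟩)
    set K : Set (X × X) := ⋃ q ∈ Bad, {z : X | (q.1, z) ∈ G} ×ˢ ({q.2} : Set X) with hK
    have hKclosed : IsClosed K := by
      apply hBfin.isClosed_biUnion
      intro q _
      exact (hGclosed.preimage (Continuous.prodMk_right q.1)).prod isClosed_singleton
    refine ⟨Kᶜ, ?_, ?_⟩
    · apply hKclosed.isOpen_compl.mem_nhdsSet.mpr
      rintro ⟨a, b⟩ hab
      have hab' : a = b := hab
      subst hab'
      intro hmem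
      simp only [hK, Set.mem_iUnion] at hmem
      obtain ⟨q, hq, hmem⟩ := hmem
      obtain ⟨h1, h2⟩ := hmem
      have h2' : a = q.2 := h2
      exact hq.2.2 (show (q.1, q.2) ∈ G from h2' ▸ h1)
    · intro x hx
      have hstep : ∀ n, (x n, x (n + 1)) ∈ G := by
        intro n
        by_contra hg
        obtain ⟨y, hy1, hy2⟩ := hx.2 n
        apply hy2
        simp only [hK, Set.mem_iUnion]
        exact ⟨(x n, x (n + 1)), ⟨hx.1 n, hx.1 (n + 1), hg⟩, hy1, rfl⟩
      have hxleg : IsLegal G (x 0) := ⟨x, rfl, hstep⟩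
      refine ⟨x 0, hxleg, ?_⟩
      intro s hsT n
      obtain ⟨w, hw, huw⟩ := huniq (x 0) hxleg
      have hs : s = w := huw s hsT
      have hx' : x = w := huw x ⟨rfl, hstep⟩
      have : s n = x n := by rw [hs, hx']
      rw [this]
      exact subset_of_mem_nhdsSet hU rfl
end

section
/- Let (X, G) be a CR-dynamical system such that Gⁿ = Δ_X for some positive integer n, where Δ_X = {(x,x) : x ∈ X}. Then there exists a continuous self-map f : X → X such that G = {(x, f(x)) : x ∈ X}. -/
open Set Filter Topology

/-- Left decomposition of `relPow`. -/
lemma relPow_succ_left {X : Type*} (G : Set (X × X)) (n : ℕ) (p : X × X) :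
    p ∈ relPow G (n + 1) ↔ ∃ z : X, (p.1, z) ∈ G ∧ (z, p.2) ∈ relPow G n := by
  induction n generalizing p with
  | zero =>
    constructor
    · rintro ⟨z, hz, hzp⟩
      cases hz
      exact ⟨p.2, hzp, rfl⟩
    · rintro ⟨z, hz, hzp⟩
      cases hzp
      exact ⟨p.1, rfl, hz⟩
  | succ m ih =>
    constructor
    · rintro ⟨z, hz, hzp⟩
      obtain ⟨w, hw, hwz⟩ := (ih (p.1, z)).mp hz
      exact ⟨w, hw, z, hwz, hzp⟩
    · rintro ⟨z, hz, w, hw, hwp⟩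
      exact ⟨w, (ih (p.1, w)).mpr ⟨z, hz, hw⟩, hwp⟩

/-- if Gⁿ = Δ_X for some positive n then G is the graph of a
continuous self-map. -/
theorem stmt_10 {X : Type*} [TopologicalSpace X] [CompactSpace X] [T2Space X] [Nonempty X]
    (G : Set (X × X)) (hGclosed : IsClosed G) (hGne : G.Nonempty)
    (hGpow : ∀ n : ℕ, 1 ≤ n → (relPow G n).Nonempty)
    (n : ℕ) (hn : 1 ≤ n) (hdiag : relPow G n = Set.diagonal X) :
    ∃ f : X → X, Continuous f ∧ G = {p : X × X | p.2 = f p.1} := by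
  obtain ⟨m, rfl⟩ : ∃ m, n = m + 1 := ⟨n - 1, (Nat.succ_pred_eq_of_pos hn).symm⟩
  -- existence and uniqueness of successors
  have key : ∀ x : X, ∃! y : X, (x, y) ∈ G := by
    intro x
    have hxx : (x, x) ∈ relPow G (m + 1) := by rw [hdiag]; exact rfl
    obtain ⟨z, hxz, hzx⟩ := (relPow_succ_left G m (x, x)).mp hxx
    refine ⟨z, hxz, ?_⟩
    intro y hxy
    have : (z, y) ∈ relPow G (m + 1) := ⟨x, hzx, hxy⟩
    rw [hdiag] at this
    exact this.symm
  choose f hf hf' using key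
  refine ⟨f, ?_, ?_⟩
  · -- continuity via closed preimages
    rw [continuous_iff_isClosed]
    intro C hC
    have : f ⁻¹' C = Prod.fst '' (G ∩ (Set.univ ×ˢ C)) := by
      ext x
      constructor
      · intro hx
        exact ⟨(x, f x), ⟨hf x, Set.mem_univ _, hx⟩, rfl⟩
      · rintro ⟨⟨a, b⟩, ⟨hab, -, hb⟩, rfl⟩
        have : b = f a := hf' a b hab
        simpa [Set.mem_preimage, ← this]
    rw [this]
    exact ((hGclosed.inter (isClosed_univ.prod hC)).isCompact.image
      continuous_fst).isClosed
  · ext ⟨a, b⟩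
    constructor
    · intro h
      exact (hf' a b h).symm ▸ rfl
    · intro h
      simp only [Set.mem_setOf_eq] at h
      exact h ▸ hf a
end

section
/- Suppose (X, G) is a CR-dynamical system with Δ_X ⊆ G. Then: (1) if (X, G) has the (2,1)-shadowing property, then X is totally disconnected; (2) if X is totally disconnected, then (X, G) has the (1,2)-shadowing property. -/
open Set Filter Topology

lemma chain_of_preconnected {X : Type*} [TopologicalSpace X] {V : Set (X × X)}
    (hVo : IsOpen V) (hVd : Set.diagonal X ⊆ V) {t : Set X} (ht : IsPreconnected t)
    {a b : X} (ha : a ∈ t) (hb : b ∈ t) :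
    ∃ (N : ℕ) (c : ℕ → X), c 0 = a ∧ (∀ n, (c n, c (n + 1)) ∈ V) ∧ ∀ n, N ≤ n → c n = b := by
  set R : Set X := {z | Relation.ReflTransGen (fun p q => (p, q) ∈ V) a z} with hR
  have hRopen : IsOpen R := by
    rw [isOpen_iff_mem_nhds]
    intro z hz
    have h1 : {w | (z, w) ∈ V} ∈ 𝓝 z :=
      (hVo.preimage (Continuous.prodMk_right z)).mem_nhds (hVd rfl)
    exact Filter.mem_of_superset h1 fun w hw => hz.tail hw
  have hRclosed : IsClosed R := by
    rw [← isOpen_compl_iff, isOpen_iff_mem_nhds]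
    intro z hz
    have h1 : {w | (w, z) ∈ V} ∈ 𝓝 z :=
      (hVo.preimage (continuous_id.prodMk continuous_const)).mem_nhds (hVd rfl)
    exact Filter.mem_of_superset h1 fun w hw hwR => hz (hwR.tail hw)
  have hbR : b ∈ R :=
    ht.subset_isClopen ⟨hRclosed, hRopen⟩ ⟨a, ha, Relation.ReflTransGen.refl⟩ hb
  clear ha hb ht
  induction hbR with
  | refl => exact ⟨0, fun _ => a, rfl, fun n => hVd rfl, fun n _ => rfl⟩
  | @tail y z hy hyz ih =>
    obtain ⟨N, c, hc0, hcs, hcN⟩ := ih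
    refine ⟨N + 1, fun n => if n ≤ N then c n else z, by simp [hc0], ?_, ?_⟩
    · intro n
      by_cases h1 : n + 1 ≤ N
      · have h2 : n ≤ N := by omega
        simp only [if_pos h1, if_pos h2]; exact hcs n
      · by_cases h2 : n ≤ N
        · have h3 : n = N := by omega
          subst h3
          simp only [if_pos h2, if_neg h1, hcN n le_rfl]
          exact hyz
        · simp only [if_neg h1, if_neg h2]; exact hVd rfl
    · intro n hn
      have : ¬ n ≤ N := by omega
      simp [this]

lemma exists_equiv_entourage {X : Type*} [TopologicalSpace X] [CompactSpace X] [T2Space X]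
    [TotallyDisconnectedSpace X] {U : Set (X × X)} (hU : U ∈ 𝓝ˢ (Set.diagonal X)) :
    ∃ V : Set (X × X), IsOpen V ∧ Set.diagonal X ⊆ V ∧ V ⊆ U ∧
      ∀ p q r : X, (p, q) ∈ V → (q, r) ∈ V → (p, r) ∈ V := by
  have hx : ∀ x : X, ∃ C : Set X, IsClopen C ∧ x ∈ C ∧ C ×ˢ C ⊆ U := by
    intro x
    have h1 : U ∈ 𝓝 (x, x) := mem_nhdsSet_iff_forall.1 hU (x, x) rfl
    rw [mem_nhds_prod_iff'] at h1
    obtain ⟨u, v, hu, hxu, hv, hxv, huv⟩ := h1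
    obtain ⟨C, hC, hxC, hCsub⟩ :=
      compact_exists_isClopen_in_isOpen (hu.inter hv) ⟨hxu, hxv⟩
    exact ⟨C, hC, hxC, fun p hp => huv ⟨(hCsub hp.1).1, (hCsub hp.2).2⟩⟩
  choose C hCclopen hCmem hCsub using hx
  obtain ⟨s, hs⟩ := isCompact_univ.elim_finite_subcover C (fun i => (hCclopen i).2)
    (fun x _ => mem_iUnion.2 ⟨x, hCmem x⟩)
  refine ⟨⋂ i ∈ s, {p : X × X | p.1 ∈ C i ↔ p.2 ∈ C i}, ?_, ?_, ?_, ?_⟩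
  · refine isOpen_biInter_finset fun i _ => ?_
    have : {p : X × X | p.1 ∈ C i ↔ p.2 ∈ C i} =
        (C i ×ˢ C i) ∪ ((C i)ᶜ ×ˢ (C i)ᶜ) := by
      ext ⟨p, q⟩
      simp only [mem_setOf_eq, mem_union, mem_prod, mem_compl_iff]
      tauto
    rw [this]
    exact (((hCclopen i).2).prod ((hCclopen i).2)).union
      (((hCclopen i).1.isOpen_compl).prod ((hCclopen i).1.isOpen_compl))
  · rintro ⟨p, q⟩ hpq
    cases hpq
    exact mem_iInter₂.2 fun i _ => Iff.rfl
  · rintro ⟨p, q⟩ hpq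
    obtain ⟨i, hi, hpCi⟩ : ∃ i ∈ s, p ∈ C i := by
      have := hs (mem_univ p); simpa using this
    exact hCsub i ⟨hpCi, (mem_iInter₂.1 hpq i hi).1 hpCi⟩
  · intro p q r hpq hqr
    refine mem_iInter₂.2 fun i hi => ?_
    exact (mem_iInter₂.1 hpq i hi).trans (mem_iInter₂.1 hqr i hi)

/-- for Δ_X ⊆ G: (2,1)-shadowing implies X totally disconnected, and
X totally disconnected implies (1,2)-shadowing. -/
theorem stmt_11 {X : Type*} [TopologicalSpace X] [CompactSpace X] [T2Space X] [Nonempty X]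
    (G : Set (X × X)) (hGclosed : IsClosed G) (hGne : G.Nonempty)
    (hGpow : ∀ n : ℕ, 1 ≤ n → (relPow G n).Nonempty)
    (hdiag : Set.diagonal X ⊆ G) :
    (Shadowing21 G → TotallyDisconnectedSpace X) ∧
      (TotallyDisconnectedSpace X → Shadowing12 G) := by
  constructor
  · intro hSh
    refine ⟨fun t _ ht a ha b hb => ?_⟩
    by_contra hab
    obtain ⟨A, B, hAo, hBo, haA, hbB, hAB⟩ := t2_separation hab
    obtain ⟨A₁, hA₁o, haA₁, hA₁sub⟩ :=
      normal_exists_closure_subset isClosed_singleton hAo (singleton_subset_iff.2 haA)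
    obtain ⟨B₁, hB₁o, hbB₁, hB₁sub⟩ :=
      normal_exists_closure_subset isClosed_singleton hBo (singleton_subset_iff.2 hbB)
    set U : Set (X × X) := (Aᶜ ×ˢ A₁)ᶜ ∩ (Bᶜ ×ˢ B₁)ᶜ with hUdef
    have key : ∀ (C C₁ : Set X), IsOpen C → closure C₁ ⊆ C →
        (Cᶜ ×ˢ C₁)ᶜ ∈ 𝓝ˢ (Set.diagonal X) := by
      intro C C₁ hCo hC₁sub
      rw [mem_nhdsSet_iff_forall]
      rintro ⟨x, y⟩ hxy
      cases hxy
      by_cases hxC : x ∈ C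
      · refine Filter.mem_of_superset ((hCo.prod isOpen_univ).mem_nhds ⟨hxC, trivial⟩) ?_
        rintro ⟨p, q⟩ hpq hmem
        exact hmem.1 hpq.1
      · have hxcl : x ∉ closure C₁ := fun h => hxC (hC₁sub h)
        refine Filter.mem_of_superset
          ((isOpen_univ.prod isClosed_closure.isOpen_compl).mem_nhds ⟨trivial, hxcl⟩) ?_
        rintro ⟨p, q⟩ hpq hmem
        exact hpq.2 (subset_closure hmem.2)
    have hUent : IsEntourage U :=
      Filter.inter_mem (key A A₁ hAo hA₁sub) (key B B₁ hBo hB₁sub)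
    obtain ⟨V, hVent, hVsh⟩ := hSh U hUent
    have hV'd : Set.diagonal X ⊆ interior V := subset_interior_iff_mem_nhdsSet.2 hVent
    obtain ⟨N, c, hc0, hcs, hcN⟩ := chain_of_preconnected isOpen_interior hV'd ht ha hb
    have hPO : IsPO2 G V c :=
      ⟨fun n => ⟨c n, hdiag rfl⟩, fun n => ⟨c n, hdiag rfl, interior_subset (hcs n)⟩⟩
    obtain ⟨y, _, hysh⟩ := hVsh c hPO
    have htraj : IsTrajectory G y fun _ => y := ⟨rfl, fun _ => hdiag rfl⟩
    have hU0 : (y, a) ∈ U := hc0 ▸ hysh (fun _ => y) htraj 0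
    have hUN : (y, b) ∈ U := hcN N le_rfl ▸ hysh (fun _ => y) htraj N
    have hyA : y ∈ A := by
      by_contra hyA
      exact hU0.1 ⟨hyA, haA₁ rfl⟩
    have hyB : y ∈ B := by
      by_contra hyB
      exact hUN.2 ⟨hyB, hbB₁ rfl⟩
    exact Set.disjoint_left.1 hAB hyA hyB
  · intro hTD U hUent
    haveI := hTD
    obtain ⟨V, hVo, hVd, hVU, hVtrans⟩ := exists_equiv_entourage hUent
    refine ⟨V, hVo.mem_nhdsSet.2 hVd, ?_⟩
    intro x hx
    have hstep : ∀ n, (x n, x (n + 1)) ∈ V := fun n => hx.2 n (x n) (hdiag rfl)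
    have hall : ∀ n, (x 0, x n) ∈ V := by
      intro n
      induction n with
      | zero => exact hVd rfl
      | succ n ih => exact hVtrans _ _ _ ih (hstep n)
    exact ⟨x 0, fun _ => x 0, ⟨rfl, fun _ => hdiag rfl⟩, fun n => hVU (hall n)⟩
end

section
/- Let (X, G) be a CR-dynamical system such that G = Δ_X ∪ (X × {x}) for some point x ∈ X, where Δ_X = {(z,z) : z ∈ X}. Then (X, G) has the (1,1)-shadowing property. -/
open Set Filter Topology
open scoped Uniformity

/-- if G = Δ_X ∪ (X × {x}) then (X,G) has the (1,1)-shadowing property. -/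
theorem stmt_12 {X : Type*} [TopologicalSpace X] [CompactSpace X] [T2Space X] [Nonempty X]
    (G : Set (X × X)) (hGclosed : IsClosed G) (hGne : G.Nonempty)
    (hGpow : ∀ n : ℕ, 1 ≤ n → (relPow G n).Nonempty)
    (x : X) (hG : G = Set.diagonal X ∪ Set.univ ×ˢ ({x} : Set X)) :
    Shadowing11 G := by
  letI : UniformSpace X := uniformSpaceOfCompactR1
  have hent : ∀ S : Set (X × X), IsEntourage S ↔ S ∈ 𝓤 X := by
    intro S
    rw [IsEntourage, nhdsSet_diagonal_eq_uniformity]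
  intro U hU
  rw [hent] at hU
  obtain ⟨W, hW, hWsymm, hWU⟩ := comp_symm_mem_uniformity_sets hU
  obtain ⟨V, hV, hVsymm, hVW⟩ := comp_symm_mem_uniformity_sets hW
  refine ⟨V, (hent V).2 hV, ?_⟩
  rintro z ⟨hzdom, hzV⟩
  have hxG : ∀ a : X, (a, x) ∈ G := fun a => by
    rw [hG]; exact Or.inr ⟨mem_univ a, rfl⟩
  have hdiagG : ∀ a : X, (a, a) ∈ G := fun a => by
    rw [hG]; exact Or.inl rfl
  have hxz : ∀ n : ℕ, (x, z (n + 1)) ∈ V := fun n => hzV n x (hxG _)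
  have hzz : ∀ n : ℕ, (z n, z (n + 1)) ∈ V := fun n => hzV n (z n) (hdiagG _)
  have hVsubW : ∀ p : X × X, p ∈ V → p ∈ W := fun p hp =>
    hVW ⟨p.2, hp, refl_mem_uniformity hV⟩
  have hWsubU : ∀ p : X × X, p ∈ W → p ∈ U := fun p hp =>
    hWU ⟨p.2, hp, refl_mem_uniformity hW⟩
  refine ⟨z 0, ⟨fun _ => z 0, rfl, fun n => hdiagG _⟩, ?_⟩
  intro s hs n
  have hmem : ∀ m : ℕ, s m = z 0 ∨ s m = x := by
    intro m
    induction m with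
    | zero => exact Or.inl hs.1
    | succ m ih =>
      have h := hs.2 m
      rw [hG] at h
      rcases h with h | h
      · rw [show s (m + 1) = s m from h.symm]; exact ih
      · exact Or.inr h.2
  cases n with
  | zero =>
    rw [hs.1]
    exact refl_mem_uniformity hU
  | succ n =>
    rcases hmem (n + 1) with h | h
    · rw [h]
      refine hWU ⟨x, hVW ⟨z 1, hzz 0, SetRel.symm V (hxz 0)⟩, hVsubW _ (hxz n)⟩
    · rw [h]
      exact hWsubU _ (hVsubW _ (hxz n))
end

section
/- Suppose (X, G) is a CR-dynamical system with Δ_X ⊆ G. If (X, G) has the (2,1)-shadowing property, then G = Δ_X. -/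
open Set Filter Topology

/-- if Δ_X ⊆ G and (X,G) has the (2,1)-shadowing property, then G = Δ_X. -/
theorem stmt_13 {X : Type*} [TopologicalSpace X] [CompactSpace X] [T2Space X] [Nonempty X]
    (G : Set (X × X)) (hGclosed : IsClosed G) (hGne : G.Nonempty)
    (hGpow : ∀ n : ℕ, 1 ≤ n → (relPow G n).Nonempty)
    (hdiag : Set.diagonal X ⊆ G)
    (hshad : Shadowing21 G) :
    G = Set.diagonal X := by
  refine Set.Subset.antisymm ?_ hdiag
  rintro ⟨a, b⟩ hab
  by_contra hne
  have hne' : a ≠ b := fun h => hne (by simp [Set.mem_diagonal_iff, h])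
  obtain ⟨A, B, hA, hB, haA, hbB, hABd⟩ := t2_separation hne'
  set U : Set (X × X) := (A ×ˢ A) ∪ (B ×ˢ B) ∪ ((Set.univ : Set X) ×ˢ ({a, b} : Set X)ᶜ)
    with hUdef
  have hclosed : IsClosed ({a, b} : Set X) := (Set.toFinite {a, b}).isClosed
  have hUopen : IsOpen U :=
    ((hA.prod hA).union (hB.prod hB)).union (isOpen_univ.prod hclosed.isOpen_compl)
  have hdiagU : Set.diagonal X ⊆ U := by
    rintro ⟨x, y⟩ hxy
    simp only [Set.mem_diagonal_iff] at hxy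
    subst hxy
    by_cases hxA : x ∈ A
    · exact Or.inl (Or.inl ⟨hxA, hxA⟩)
    by_cases hxB : x ∈ B
    · exact Or.inl (Or.inr ⟨hxB, hxB⟩)
    · refine Or.inr ⟨trivial, ?_⟩
      simp only [Set.mem_compl_iff, Set.mem_insert_iff, Set.mem_singleton_iff]
      rintro (rfl | rfl) <;> [exact hxA haA; exact hxB hbB]
  have hUent : IsEntourage U := hUopen.mem_nhdsSet.mpr hdiagU
  obtain ⟨V, hVent, hV⟩ := hshad U hUent
  have hdiagV : Set.diagonal X ⊆ V := subset_of_mem_nhdsSet hVent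
  set x : ℕ → X := fun n => if n = 0 then a else b with hxdef
  have hPO : IsPO2 G V x := by
    constructor
    · intro n
      exact ⟨x n, hdiag rfl⟩
    · intro n
      refine ⟨b, ?_, ?_⟩
      · rcases Nat.eq_zero_or_pos n with rfl | hn
        · simpa [hxdef] using hab
        · have : x n = b := by simp [hxdef, hn.ne']
          rw [this]; exact hdiag rfl
      · have : x (n + 1) = b := by simp [hxdef]
        rw [this]; exact hdiagV rfl
  obtain ⟨z, hzlegal, hzsh⟩ := hV x hPO
  have htraj : IsTrajectory G z (fun _ => z) := ⟨rfl, fun _ => hdiag rfl⟩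
  have hz0 : (z, a) ∈ U := by simpa [hxdef] using hzsh (fun _ => z) htraj 0
  have hz1 : (z, b) ∈ U := by simpa [hxdef] using hzsh (fun _ => z) htraj 1
  have hzA : z ∈ A := by
    rcases hz0 with (⟨hz, ha⟩ | ⟨hz, ha⟩) | ⟨-, ha⟩
    · exact hz
    · exact absurd (Set.mem_inter haA ha) (by rw [hABd.inter_eq]; exact notMem_empty a)
    · exact absurd (by simp : a ∈ ({a, b} : Set X)) ha
  have hzB : z ∈ B := by
    rcases hz1 with (⟨hz, hb⟩ | ⟨hz, hb⟩) | ⟨-, hb⟩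
    · exact absurd (Set.mem_inter hb hbB) (by rw [hABd.inter_eq]; exact notMem_empty b)
    · exact hz
    · exact absurd (by simp : b ∈ ({a, b} : Set X)) hb
  exact absurd (Set.mem_inter hzA hzB) (by rw [hABd.inter_eq]; exact notMem_empty z)
end

section
/- Suppose (X, G) is a CR-dynamical system with Δ_X ⊆ Gⁿ for some positive integer n. If (X, G) has the (2,1)-shadowing property, then there exists a continuous self-map f : X → X such that G = {(x, f(x)) : x ∈ X}. -/
open Set Filter Topology Uniformity

/-- From membership in `relPow G m` we can extract a finite chain of `G`-steps. -/
lemma relPow_exists_chain {X : Type*} {G : Set (X × X)} :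
    ∀ (m : ℕ) (x y : X), (x, y) ∈ relPow G m →
      ∃ c : ℕ → X, c 0 = x ∧ c m = y ∧ ∀ k < m, (c k, c (k + 1)) ∈ G := by
  intro m
  induction m with
  | zero =>
    intro x y h
    exact ⟨fun _ => x, rfl, h, fun k hk => absurd hk (Nat.not_lt_zero k)⟩
  | succ m ih =>
    intro x y h
    obtain ⟨z, hz1, hz2⟩ := h
    obtain ⟨c, hc0, hcm, hstep⟩ := ih x z hz1
    have h0 : (0 : ℕ) ≠ m + 1 := by omega
    refine ⟨fun k => if k = m + 1 then y else c k, by simp [h0, hc0], by simp, ?_⟩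
    intro k hk
    rcases Nat.lt_succ_iff_lt_or_eq.1 hk with hk' | rfl
    · have h1 : k ≠ m + 1 := by omega
      have h2 : k ≠ m := by omega
      simpa [h1, h2] using hstep k hk'
    · simp only [if_pos rfl]
      have h1 : k ≠ k + 1 := by omega
      simpa [h1, hcm] using hz2

/-- Every point on a `relPow`-cycle has an `n`-periodic trajectory through it. -/
lemma cycle_traj {X : Type*} {G : Set (X × X)} {n : ℕ} (hn : 1 ≤ n) (z : X)
    (h : (z, z) ∈ relPow G n) :
    ∃ t : ℕ → X, t 0 = z ∧ (∀ k, (t k, t (k + 1)) ∈ G) ∧ ∀ j k, t (j * n + k) = t k := by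
  obtain ⟨c, hc0, hcn, hstep⟩ := relPow_exists_chain n z z h
  refine ⟨fun k => c (k % n), by simp [hc0], ?_, ?_⟩
  · intro k
    show (c (k % n), c ((k + 1) % n)) ∈ G
    have hr : k % n < n := Nat.mod_lt _ (by omega)
    have h4 : (k + 1) % n = (k % n + 1) % n := by
      conv_lhs => rw [← Nat.div_add_mod k n]
      rw [Nat.add_assoc, Nat.mul_add_mod]
    rcases Nat.lt_or_ge (k % n + 1) n with hlt | hge
    · have h1 : (k + 1) % n = k % n + 1 := by rw [h4, Nat.mod_eq_of_lt hlt]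
      rw [h1]; exact hstep _ hr
    · have h2 : k % n + 1 = n := by omega
      have h1 : (k + 1) % n = 0 := by rw [h4, h2, Nat.mod_self]
      rw [h1]
      have : c 0 = c (k % n + 1) := by rw [h2, hcn, hc0]
      rw [this]
      exact hstep _ hr
  · intro j k
    show c ((j * n + k) % n) = c (k % n)
    have : (j * n + k) % n = k % n := by
      rw [Nat.add_comm, Nat.add_mul_mod_self_right]
    rw [this]

/-- Separation of two distinct points by a four-fold small entourage. -/
lemma exists_sep {X : Type*} [TopologicalSpace X] [CompactSpace X] [T2Space X]
    {a b : X} (hab : a ≠ b) :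
    ∃ W : Set (X × X), IsEntourage W ∧
      ∀ u u' z : X, (u, z) ∈ W → (u, a) ∈ W → (u', z) ∈ W → (u', b) ∈ W → False := by
  letI : UniformSpace X := uniformSpaceOfCompactR1
  have hU0 : ({(a, b)}ᶜ : Set (X × X)) ∈ 𝓤 X := by
    rw [← nhdsSet_diagonal_eq_uniformity]
    refine (isClosed_singleton.isOpen_compl).mem_nhdsSet.2 ?_
    rintro ⟨x, y⟩ h
    simp only [mem_compl_iff, mem_singleton_iff, Prod.mk.injEq]
    rintro ⟨rfl, rfl⟩
    exact hab h
  obtain ⟨W1, hW1, hW1sym, hW1c⟩ := comp_symm_mem_uniformity_sets hU0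
  obtain ⟨W, hW, hWsym, hWc⟩ := comp_symm_mem_uniformity_sets hW1
  refine ⟨W, (show IsEntourage W by unfold IsEntourage; rw [nhdsSet_diagonal_eq_uniformity]; exact hW), fun u u' z h1 h2 h3 h4 => ?_⟩
  have haz : (a, z) ∈ W1 := hWc ⟨u, (SetRel.comm (R := W)).1 h2, h1⟩
  have hzb : (z, b) ∈ W1 := hWc ⟨u', (SetRel.comm (R := W)).1 h3, h4⟩
  exact hW1c ⟨z, haz, hzb⟩ rfl

/-- if Δ_X ⊆ Gⁿ for some positive n and (X,G) has the (2,1)-shadowing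
property, then G is the graph of a continuous self-map. -/
theorem stmt_14 {X : Type*} [TopologicalSpace X] [CompactSpace X] [T2Space X] [Nonempty X]
    (G : Set (X × X)) (hGclosed : IsClosed G) (hGne : G.Nonempty)
    (hGpow : ∀ n : ℕ, 1 ≤ n → (relPow G n).Nonempty)
    (n : ℕ) (hn : 1 ≤ n) (hdiag : Set.diagonal X ⊆ relPow G n)
    (hshad : Shadowing21 G) :
    ∃ f : X → X, Continuous f ∧ G = {p : X × X | p.2 = f p.1} := by
  -- Every point has an `n`-periodic trajectory.
  have hcyc : ∀ z : X, ∃ t : ℕ → X, t 0 = z ∧ (∀ k, (t k, t (k + 1)) ∈ G) ∧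
      ∀ j k, t (j * n + k) = t k := fun z => cycle_traj hn z (hdiag (mem_diagonal z))
  -- Every point is non-degenerate.
  have hdom : ∀ z : X, ∃ w : X, (z, w) ∈ G := by
    intro z
    obtain ⟨t, ht0, htstep, -⟩ := hcyc z
    exact ⟨t 1, ht0 ▸ htstep 0⟩
  -- G is single-valued.
  have huniq : ∀ x a b : X, (x, a) ∈ G → (x, b) ∈ G → a = b := by
    intro x a b ha hb
    by_contra hab
    obtain ⟨W, hWent, hWsep⟩ := exists_sep hab
    obtain ⟨V, hVent, hshadW⟩ := hshad W hWent
    obtain ⟨c, hc0, hcstep, hcper⟩ := hcyc x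
    have hVdiag : ∀ z : X, (z, z) ∈ V := fun z => subset_of_mem_nhdsSet hVent (mem_diagonal z)
    have key : ∀ d : X, (x, d) ∈ G → ∃ u : X, (u, c 1) ∈ W ∧ (u, d) ∈ W := by
      intro d hd
      obtain ⟨w, hw0, hwstep, -⟩ := hcyc d
      set p : ℕ → X := fun k => if k ≤ n then c k else w (k - (n + 1)) with hp
      have hcn : c n = x := by
        have := hcper 1 0
        simpa [hc0] using this
      have hptraj : ∀ k : ℕ, (p k, p (k + 1)) ∈ G := by
        intro k
        rcases lt_trichotomy k n with hk | rfl | hk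
        · have h1 : k ≤ n := le_of_lt hk
          have h2 : k + 1 ≤ n := hk
          simp only [hp, if_pos h1, if_pos h2]
          exact hcstep k
        · have h1 : k ≤ k := le_refl k
          have h2 : ¬ (k + 1 ≤ k) := by omega
          simp only [hp, if_pos h1, if_neg h2]
          have : k + 1 - (k + 1) = 0 := by omega
          rw [this, hw0, hcn]
          exact hd
        · have h1 : ¬ (k ≤ n) := by omega
          have h2 : ¬ (k + 1 ≤ n) := by omega
          simp only [hp, if_neg h1, if_neg h2]
          have h3 : k + 1 - (n + 1) = (k - (n + 1)) + 1 := by omega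
          rw [h3]
          exact hwstep _
      have hpo : IsPO2 G V p := by
        refine ⟨fun k => hdom (p k), fun k => ⟨p (k + 1), hptraj k, hVdiag _⟩⟩
      obtain ⟨y, hyleg, hysh⟩ := hshadW p hpo
      obtain ⟨t, ht0, htstep, htper⟩ := hcyc y
      have htraj : IsTrajectory G y t := ⟨ht0, htstep⟩
      have h1 := hysh t htraj 1
      have h2 := hysh t htraj (n + 1)
      have ht11 : t (n + 1) = t 1 := by
        have := htper 1 1
        simpa using this
      have hp1 : p 1 = c 1 := by simp only [hp, if_pos hn]
      have hpn1 : p (n + 1) = d := by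
        have h1' : ¬ (n + 1 ≤ n) := by omega
        simp only [hp, if_neg h1']
        simp [hw0]
      rw [hp1] at h1
      rw [ht11, hpn1] at h2
      exact ⟨t 1, h1, h2⟩
    obtain ⟨u, hu1, hu2⟩ := key a ha
    obtain ⟨u', hu1', hu2'⟩ := key b hb
    exact hWsep u u' (c 1) hu1 hu2 hu1' hu2'
  -- Define f by choice.
  choose g hg using hdom
  have hgraph : G = {p : X × X | p.2 = g p.1} := by
    ext ⟨u, v⟩
    simp only [mem_setOf_eq]
    constructor
    · intro h; exact huniq u v (g u) h (hg u)
    · rintro rfl; exact hg u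
  refine ⟨g, ?_, hgraph⟩
  rw [continuous_iff_isClosed]
  intro C hC
  have hpre : g ⁻¹' C = Prod.fst '' (G ∩ (Set.univ ×ˢ C)) := by
    ext u
    constructor
    · intro hu
      exact ⟨(u, g u), ⟨hg u, ⟨trivial, hu⟩⟩, rfl⟩
    · rintro ⟨⟨u', v⟩, ⟨hG, -, hv⟩, rfl⟩
      have hvg : v = g u' := huniq u' v (g u') hG (hg u')
      simpa [mem_preimage, hvg] using hv
  rw [hpre]
  exact (((hGclosed.inter (isClosed_univ.prod hC)).isCompact).image continuous_fst).isClosed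
end

section
/- Suppose (X, G) is a CR-dynamical system. If X is totally disconnected, and there exists a positive integer n such that for each x ∈ X there is a unique finite sequence (x₀, x₁, …, xₙ) with (xₖ, xₖ₊₁) ∈ G for each 0 ≤ k < n and x₀ = xₙ = x, then (X, G) has the (1,2)-shadowing property. -/
open Set Filter Topology

/-- Closed graph theorem for self-maps of a compact Hausdorff space. -/
theorem my_continuous_of_closed_graph {X : Type*} [TopologicalSpace X] [CompactSpace X]
    [T2Space X] (f : X → X) (hΓ : IsClosed {p : X × X | p.2 = f p.1}) : Continuous f := by
  rw [continuous_iff_isClosed]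
  intro C hC
  have : f ⁻¹' C = Prod.fst '' ({p : X × X | p.2 = f p.1} ∩ univ ×ˢ C) := by
    ext a
    constructor
    · intro ha; exact ⟨(a, f a), ⟨rfl, by simp, ha⟩, rfl⟩
    · rintro ⟨p, ⟨hp1, -, hp2⟩, rfl⟩
      simp only [mem_preimage]
      rw [← hp1]; exact hp2
  rw [this]
  exact isClosedMap_fst_of_compactSpace _ (hΓ.inter (isClosed_univ.prod hC))

/-- if X is totally disconnected and there is a positive n so that
each x has a unique G-chain (x₀,…,xₙ) with x₀ = xₙ = x, then (X,G) has the
(1,2)-shadowing property. -/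
theorem stmt_15 {X : Type*} [TopologicalSpace X] [CompactSpace X] [T2Space X] [Nonempty X]
    (G : Set (X × X)) (hGclosed : IsClosed G) (hGne : G.Nonempty)
    (hGpow : ∀ n : ℕ, 1 ≤ n → (relPow G n).Nonempty)
    (hX : TotallyDisconnectedSpace X)
    (n : ℕ) (hn : 1 ≤ n)
    (huniq : ∀ x : X, ∃! c : Fin (n + 1) → X,
      c 0 = x ∧ c (Fin.last n) = x ∧ ∀ i : Fin n, (c i.castSucc, c i.succ) ∈ G) :
    Shadowing12 G := by
  classical
  have hnpos : 0 < n := hn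
  have huniq' : ∀ x : X, ∃ cc : Fin (n + 1) → X,
      (cc 0 = x ∧ cc (Fin.last n) = x ∧ ∀ i : Fin n, (cc i.castSucc, cc i.succ) ∈ G) ∧
      ∀ y : Fin (n + 1) → X,
        (y 0 = x ∧ y (Fin.last n) = x ∧ ∀ i : Fin n, (y i.castSucc, y i.succ) ∈ G) → y = cc :=
    fun x => huniq x
  choose c hc hcu using huniq'
  have hc0 : ∀ x, c x 0 = x := fun x => (hc x).1
  have hcl : ∀ x, c x (Fin.last n) = x := fun x => (hc x).2.1
  have hce : ∀ x, ∀ i : Fin n, (c x i.castSucc, c x i.succ) ∈ G := fun x => (hc x).2.2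
  -- the periodic trajectory through x
  set t : X → ℕ → X := fun x m => c x ⟨m % n, Nat.lt_succ_of_lt (Nat.mod_lt m hnpos)⟩
    with ht_def
  have hmk0 : ∀ (x : X) (h : 0 < n + 1), c x ⟨0, h⟩ = x := by
    intro x h
    have : (⟨0, h⟩ : Fin (n + 1)) = 0 := Fin.ext (by simp)
    rw [this]; exact hc0 x
  have hmkn : ∀ (x : X) (h : n < n + 1), c x ⟨n, h⟩ = x := by
    intro x h
    have : (⟨n, h⟩ : Fin (n + 1)) = Fin.last n := rfl
    rw [this]; exact hcl x
  have ht0 : ∀ x, t x 0 = x := by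
    intro x
    simp only [ht_def]
    have h0 : (0 : ℕ) % n = 0 := Nat.zero_mod n
    exact (by congr 1 <;> simp [h0] : c x ⟨0 % n, _⟩ = c x ⟨0, Nat.succ_pos n⟩).trans
      (hmk0 x (Nat.succ_pos n))
  have htedge : ∀ x m, (t x m, t x (m + 1)) ∈ G := by
    intro x m
    have hilt : m % n < n := Nat.mod_lt m hnpos
    by_cases h : m % n + 1 < n
    · have h2 : (m + 1) % n = m % n + 1 := by
        rw [Nat.add_mod, Nat.mod_eq_of_lt (show 1 < n by omega), Nat.mod_eq_of_lt h]
      have h3 := hce x ⟨m % n, hilt⟩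
      rw [Fin.castSucc_mk, Fin.succ_mk] at h3
      simp only [ht_def]
      convert h3 using 3
      · exact Fin.ext h2
    · -- m % n = n - 1
      have hmn : m % n = n - 1 := by omega
      have hd : n ∣ m + 1 :=
        ⟨m / n + 1, by rw [Nat.mul_add, Nat.mul_one]; have := Nat.div_add_mod m n; omega⟩
      have h2 : (m + 1) % n = 0 := Nat.mod_eq_zero_of_dvd hd
      have h3 := hce x ⟨n - 1, by omega⟩
      rw [Fin.castSucc_mk, Fin.succ_mk] at h3
      have h4 : n - 1 + 1 = n := by omega
      simp only [ht_def]
      have e1 : c x ⟨(m + 1) % n, Nat.lt_succ_of_lt (Nat.mod_lt (m+1) hnpos)⟩ = x := by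
        have : c x ⟨(m + 1) % n, Nat.lt_succ_of_lt (Nat.mod_lt (m+1) hnpos)⟩
            = c x ⟨0, Nat.succ_pos n⟩ := by congr 1 <;> simp [h2]
        rw [this]; exact hmk0 x (Nat.succ_pos n)
      have e2 : c x ⟨n - 1 + 1, by omega⟩ = x := by
        have : c x ⟨n - 1 + 1, by omega⟩ = c x ⟨n, Nat.lt_succ_self n⟩ := by
          congr 1
          exact Fin.ext h4
        rw [this]; exact hmkn x (Nat.lt_succ_self n)
      rw [e1]
      rw [e2] at h3
      convert h3 using 3
      exact Fin.ext hmn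
  have htper : ∀ x m, t x (m + n) = t x m := by
    intro x m
    simp only [ht_def]
    congr 1
    exact Fin.ext (by simp [Nat.add_mod_right])
  -- the shift property, via uniqueness
  have hshift : ∀ x m, t (t x 1) m = t x (m + 1) := by
    intro x m
    have key : (fun j : Fin (n + 1) => t x (1 + j.val)) = c (t x 1) := by
      apply hcu (t x 1)
      refine ⟨by simp, ?_, ?_⟩
      · show t x (1 + (Fin.last n).val) = t x 1
        simp only [Fin.val_last]
        rw [Nat.add_comm 1 n]
        have := htper x 1
        rw [Nat.add_comm 1 n] at this
        exact this
      · intro i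
        show (t x (1 + i.castSucc.val), t x (1 + i.succ.val)) ∈ G
        simp only [Fin.coe_castSucc, Fin.val_succ]
        have : 1 + (i.val + 1) = (1 + i.val) + 1 := by omega
        rw [this]
        exact htedge x (1 + i.val)
    have h1 : t (t x 1) m = c (t x 1) ⟨m % n, Nat.lt_succ_of_lt (Nat.mod_lt m hnpos)⟩ := rfl
    rw [h1, ← key]
    show t x (1 + m % n) = t x (m + 1)
    simp only [ht_def]
    congr 1
    exact Fin.ext (by simp [Nat.add_mod, Nat.add_comm])
  set f : X → X := fun z => t z 1 with hf_def
  have hiter : ∀ (k : ℕ) (x : X), f^[k] x = t x k := by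
    intro k
    induction k with
    | zero => intro x; simp [ht0]
    | succ k ih =>
      intro x
      rw [Function.iterate_succ_apply, ih (f x)]
      exact hshift x k
  have hfn : ∀ x, f^[n] x = x := by
    intro x
    rw [hiter]
    simp only [ht_def]
    have : c x ⟨n % n, Nat.lt_succ_of_lt (Nat.mod_lt n hnpos)⟩ = c x ⟨0, Nat.succ_pos n⟩ := by
      congr 1 <;> simp [Nat.mod_self]
    rw [this]; exact hmk0 x (Nat.succ_pos n)
  have hfG : ∀ z, (z, f z) ∈ G := by
    intro z
    have := htedge z 0
    rwa [ht0] at this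
  -- continuity of f
  have hfcont : Continuous f := by
    apply my_continuous_of_closed_graph
    have hS : IsClosed {p : X × (Fin (n + 1) → X) |
        p.2 0 = p.1 ∧ p.2 (Fin.last n) = p.1 ∧ ∀ i : Fin n, (p.2 i.castSucc, p.2 i.succ) ∈ G} := by
      apply IsClosed.inter
      · exact isClosed_eq ((continuous_apply 0).comp continuous_snd) continuous_fst
      apply IsClosed.inter
      · exact isClosed_eq ((continuous_apply (Fin.last n)).comp continuous_snd) continuous_fst
      · show IsClosed {p : X × (Fin (n + 1) → X) |
            ∀ i : Fin n, (p.2 i.castSucc, p.2 i.succ) ∈ G}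
        have : {p : X × (Fin (n + 1) → X) | ∀ i : Fin n, (p.2 i.castSucc, p.2 i.succ) ∈ G}
            = ⋂ i : Fin n,
              (fun p : X × (Fin (n + 1) → X) => (p.2 i.castSucc, p.2 i.succ)) ⁻¹' G := by
          ext p; simp
        rw [this]
        exact isClosed_iInter fun i => hGclosed.preimage
          (((continuous_apply i.castSucc).comp continuous_snd).prodMk
            ((continuous_apply i.succ).comp continuous_snd))
    have hΓ : {p : X × X | p.2 = f p.1} =
        (fun q : X × (Fin (n + 1) → X) =>
          (q.1, q.2 ⟨1 % n, Nat.lt_succ_of_lt (Nat.mod_lt 1 hnpos)⟩)) ''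
        {p : X × (Fin (n + 1) → X) |
          p.2 0 = p.1 ∧ p.2 (Fin.last n) = p.1 ∧ ∀ i : Fin n, (p.2 i.castSucc, p.2 i.succ) ∈ G} := by
      ext ⟨a, b⟩
      constructor
      · rintro hb
        have hb' : b = f a := hb
        refine ⟨(a, c a), ⟨hc0 a, hcl a, hce a⟩, ?_⟩
        show (a, c a ⟨1 % n, Nat.lt_succ_of_lt (Nat.mod_lt 1 hnpos)⟩) = (a, b)
        rw [hb']
      · rintro ⟨⟨a', d⟩, ⟨hd0, hdl, hde⟩, heq⟩
        have h1 : a' = a := congrArg Prod.fst heq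
        have h2 : d ⟨1 % n, Nat.lt_succ_of_lt (Nat.mod_lt 1 hnpos)⟩ = b := congrArg Prod.snd heq
        have hdc : d = c a' := hcu a' d ⟨hd0, hdl, hde⟩
        show b = f a
        rw [← h2, hdc, h1]
    rw [hΓ]
    have hcomp : IsCompact {p : X × (Fin (n + 1) → X) |
        p.2 0 = p.1 ∧ p.2 (Fin.last n) = p.1 ∧ ∀ i : Fin n, (p.2 i.castSucc, p.2 i.succ) ∈ G} :=
      hS.isCompact
    exact (hcomp.image (continuous_fst.prodMk
      ((continuous_apply _).comp continuous_snd))).isClosed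
  -- main shadowing argument
  intro U hU
  have hcov : ∀ x : X, ∃ K : Set X, IsClopen K ∧ x ∈ K ∧ K ×ˢ K ⊆ U := by
    intro x
    have hUx : U ∈ 𝓝 (x, x) := mem_nhdsSet_iff_forall.mp hU (x, x) (mem_diagonal x)
    rw [mem_nhds_prod_iff] at hUx
    obtain ⟨u, hu, v, hv, huv⟩ := hUx
    obtain ⟨K, hKcl, hxK, hKuv⟩ := isTopologicalBasis_isClopen.mem_nhds_iff.mp
      (Filter.inter_mem hu hv)
    refine ⟨K, hKcl, hxK, ?_⟩
    intro p hp
    exact huv ⟨(hKuv hp.1).1, (hKuv hp.2).2⟩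
  choose K hKcl hxK hKU using hcov
  obtain ⟨T, hT⟩ := isCompact_univ.elim_finite_subcover K (fun x => (hKcl x).isOpen)
    (fun y _ => mem_iUnion.2 ⟨y, hxK y⟩)
  set E0 : Set (X × X) := {p : X × X | ∀ i ∈ T, (p.1 ∈ K i ↔ p.2 ∈ K i)} with hE0_def
  set E : Set (X × X) := {p : X × X | ∀ j < n, (f^[j] p.1, f^[j] p.2) ∈ E0} with hE_def
  have hE0open : IsOpen E0 := by
    have : E0 = ⋂ i ∈ T, ((K i ×ˢ K i) ∪ ((K i)ᶜ ×ˢ (K i)ᶜ)) := by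
      ext p
      simp only [hE0_def, mem_setOf_eq, mem_iInter, mem_union, mem_prod, mem_compl_iff]
      constructor
      · intro h i hi; by_cases hp : p.1 ∈ K i
        · exact Or.inl ⟨hp, (h i hi).mp hp⟩
        · exact Or.inr ⟨hp, fun hq => hp ((h i hi).mpr hq)⟩
      · intro h i hi
        rcases h i hi with ⟨h1, h2⟩ | ⟨h1, h2⟩
        · exact ⟨fun _ => h2, fun _ => h1⟩
        · exact ⟨fun hq => absurd hq h1, fun hq => absurd hq h2⟩
    rw [this]
    exact isOpen_biInter_finset fun i _ =>
      (((hKcl i).isOpen.prod (hKcl i).isOpen).union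
        (((hKcl i).compl.isOpen).prod ((hKcl i).compl.isOpen)))
  have hEopen : IsOpen E := by
    have : E = ⋂ j ∈ Finset.range n,
        (fun p : X × X => (f^[j] p.1, f^[j] p.2)) ⁻¹' E0 := by
      ext p
      simp [hE_def]
    rw [this]
    exact isOpen_biInter_finset fun j _ =>
      hE0open.preimage (((hfcont.iterate j).comp continuous_fst).prodMk
        ((hfcont.iterate j).comp continuous_snd))
  have hErefl : ∀ a : X, (a, a) ∈ E := fun a j _ i _ => Iff.rfl
  have hEtrans : ∀ {a b d : X}, (a, b) ∈ E → (b, d) ∈ E → (a, d) ∈ E := by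
    intro a b d h1 h2 j hj i hi
    exact (h1 j hj i hi).trans (h2 j hj i hi)
  have hEstep : ∀ {a b : X}, (a, b) ∈ E → (f a, f b) ∈ E := by
    intro a b h j hj
    show (f^[j] (f a), f^[j] (f b)) ∈ E0
    rw [← Function.iterate_succ_apply, ← Function.iterate_succ_apply]
    rcases eq_or_lt_of_le (Nat.succ_le_of_lt hj) with hcase | hcase
    · rw [hcase, hfn a, hfn b]
      exact h 0 hnpos
    · exact h (j + 1) hcase
  have hE0U : E0 ⊆ U := by
    intro p hp
    have : p.1 ∈ ⋃ i ∈ T, K i := hT (mem_univ p.1)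
    simp only [mem_iUnion] at this
    obtain ⟨i, hi, hp1⟩ := this
    exact hKU i ⟨hp1, (hp i hi).mp hp1⟩
  refine ⟨E, (hEopen.mem_nhdsSet).mpr ?_, ?_⟩
  · rintro ⟨a, b⟩ hab
    have hab' : a = b := hab
    subst hab'
    exact hErefl a
  · intro x hx
    have hcl2 : ∀ k, (f^[k] (x 0), x k) ∈ E := by
      intro k
      induction k with
      | zero => exact hErefl (x 0)
      | succ k ih =>
        have h1 : (f (f^[k] (x 0)), f (x k)) ∈ E := hEstep ih
        have h2 : (f (x k), x (k + 1)) ∈ E := hx.2 k (f (x k)) (hfG (x k))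
        have h3 := hEtrans h1 h2
        rwa [← Function.iterate_succ_apply' f k (x 0)] at h3
    exact ⟨x 0, fun k => f^[k] (x 0), ⟨rfl, fun k => by
      show (f^[k] (x 0), f^[k + 1] (x 0)) ∈ G
      rw [Function.iterate_succ_apply' f k (x 0)]; exact hfG _⟩,
      fun k => hE0U ((hcl2 k) 0 hnpos)⟩
end

section
/- Let (X, d) be a non-empty compact metric space and f : X → X an isometry (d(f(x), f(y)) = d(x, y) for all x, y ∈ X). Then (X, f) has the shadowing property if and only if X is totally disconnected. -/
open Metric Set

/-- Iterates of an isometry are isometries. -/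
lemma iter_isom {X : Type*} [MetricSpace X] {f : X → X}
    (hf : ∀ x y : X, dist (f x) (f y) = dist x y) :
    ∀ (n : ℕ) (a b : X), dist (f^[n] a) (f^[n] b) = dist a b := by
  intro n
  induction n with
  | zero => intro a b; simp
  | succ n ih =>
    intro a b
    rw [Function.iterate_succ_apply', Function.iterate_succ_apply', hf, ih]

/-- Turn a refl-trans chain into a sequence that is eventually constant. -/
lemma chain_seq {X : Type*} [MetricSpace X] {δ : ℝ} (hδ : 0 ≤ δ) {x y : X}
    (h : Relation.ReflTransGen (fun a b : X => dist a b ≤ δ) x y) :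
    ∃ (m : ℕ) (z : ℕ → X), z 0 = x ∧ (∀ k, m ≤ k → z k = y) ∧
      ∀ k, dist (z k) (z (k + 1)) ≤ δ := by
  induction h with
  | refl => exact ⟨0, fun _ => x, rfl, fun k _ => rfl, fun k => by simp [hδ]⟩
  | @tail b c hab hbc ih =>
    obtain ⟨m, z, hz0, hzm, hzd⟩ := ih
    refine ⟨m + 1, fun k => if k ≤ m then z k else c, by simp [hz0], ?_, ?_⟩
    · intro k hk
      have : ¬ k ≤ m := by omega
      simp [this]
    · intro k
      by_cases h1 : k + 1 ≤ m
      · have h2 : k ≤ m := by omega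
        simpa [h1, h2] using hzd k
      · by_cases h2 : k ≤ m
        · have hk : k = m := by omega
          simp only [h2, if_pos, h1, if_neg]
          rw [hk, hzm m le_rfl]
          exact hbc
        · simp [h1, h2, hδ]

/-- Key lemma: in a compact totally disconnected metric space, small-step chains
stay close. -/
lemma lemA {X : Type*} [MetricSpace X] [CompactSpace X] [TotallyDisconnectedSpace X]
    [Nonempty X] {ε : ℝ} (hε : 0 < ε) :
    ∃ δ : ℝ, 0 < δ ∧ ∀ x y : X,
      Relation.ReflTransGen (fun a b : X => dist a b ≤ δ) x y → dist x y < ε := by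
  -- for every point pick a clopen neighborhood inside ball x (ε/2)
  have hV : ∀ x : X, ∃ V : Set X, IsClopen V ∧ x ∈ V ∧ V ⊆ ball x (ε / 2) := by
    intro x
    exact compact_exists_isClopen_in_isOpen isOpen_ball (mem_ball_self (by linarith))
  choose V hVclopen hVmem hVball using hV
  -- finite subcover
  obtain ⟨s, hs⟩ := isCompact_univ.elim_finite_subcover V
    (fun x => (hVclopen x).2) (fun x _ => mem_iUnion.2 ⟨x, hVmem x⟩)
  -- for each i, a positive separation
  have hsep : ∀ i : X, ∃ d : ℝ, 0 < d ∧ ∀ a ∈ V i, ∀ b : X, dist a b ≤ d → b ∈ V i := by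
    intro i
    obtain ⟨r, hr, hthick⟩ := ((hVclopen i).1.isCompact).exists_thickening_subset_open
      (hVclopen i).2 subset_rfl
    refine ⟨r / 2, by linarith, fun a ha b hab => ?_⟩
    apply hthick
    rw [mem_thickening_iff]
    exact ⟨a, ha, by rw [dist_comm] at hab; linarith⟩
  choose d hd hd' using hsep
  have hsne : s.Nonempty := by
    by_contra h
    rw [Finset.not_nonempty_iff_eq_empty] at h
    obtain ⟨x⟩ := ‹Nonempty X›
    have := hs (mem_univ x)
    simp [h] at this
  refine ⟨s.inf' hsne d, ?_, ?_⟩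
  · exact (Finset.lt_inf'_iff hsne).2 fun i hi => hd i
  · intro x y hxy
    obtain ⟨i, his, hxi⟩ := by
      have := hs (mem_univ x)
      simpa using this
    -- chain stays in V i
    have hstay : y ∈ V i := by
      induction hxy with
      | refl => exact hxi
      | @tail b c hab hbc ih =>
        exact hd' i b ih c (le_trans hbc (Finset.inf'_le d his))
    have h1 : dist x i < ε / 2 := mem_ball.1 (hVball i hxi)
    have h2 : dist y i < ε / 2 := mem_ball.1 (hVball i hstay)
    calc dist x y ≤ dist x i + dist i y := dist_triangle _ _ _
      _ < ε := by rw [dist_comm i y] at *; linarith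

/-- for an isometry f of a non-empty compact metric space, (X,f) has
the shadowing property iff X is totally disconnected. -/
theorem stmt_16 {X : Type*} [MetricSpace X] [CompactSpace X] [Nonempty X]
    (f : X → X) (hf : ∀ x y : X, dist (f x) (f y) = dist x y) :
    (∀ ε : ℝ, 0 < ε → ∃ δ : ℝ, 0 < δ ∧
        ∀ x : ℕ → X, (∀ n : ℕ, dist (f (x n)) (x (n + 1)) ≤ δ) →
          ∃ y : X, ∀ n : ℕ, dist (f^[n] y) (x n) < ε) ↔
      TotallyDisconnectedSpace X := by
  constructor
  · -- shadowing ⇒ totally disconnected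
    intro hshad
    refine ⟨fun t _ ht => ?_⟩
    intro a ha b hb
    by_contra hab
    have hd0 : 0 < dist a b := dist_pos.2 hab
    set ε := dist a b / 3 with hε
    obtain ⟨δ, hδ, hsh⟩ := hshad ε (by positivity)
    -- a and b are joined by δ-chains
    have hchain : Relation.ReflTransGen (fun u v : X => dist u v ≤ δ) a b := by
      by_contra hnc
      set U := {w : X | Relation.ReflTransGen (fun u v : X => dist u v ≤ δ) a w} with hU
      have hUopen : IsOpen U := by
        rw [Metric.isOpen_iff]
        intro w hw
        refine ⟨δ, hδ, fun v hv => hw.tail (le_of_lt ?_)⟩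
        rw [dist_comm]
        exact mem_ball.1 hv
      have hUcopen : IsOpen Uᶜ := by
        rw [Metric.isOpen_iff]
        intro w hw
        refine ⟨δ, hδ, fun v hv hvU => hw ?_⟩
        exact hvU.tail (le_of_lt (mem_ball.1 hv))
      have := ht U Uᶜ hUopen hUcopen (fun x _ => by
          by_cases h : x ∈ U
          · exact Or.inl h
          · exact Or.inr h)
        ⟨a, ha, Relation.ReflTransGen.refl⟩ ⟨b, hb, hnc⟩
      obtain ⟨z, -, hz1, hz2⟩ := this
      exact hz2 hz1
    obtain ⟨m, z, hz0, hzm, hzd⟩ := chain_seq (le_of_lt hδ) hchain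
    -- pseudo-orbit n ↦ f^[n] (z n)
    obtain ⟨y, hy⟩ := hsh (fun n => f^[n] (z n)) (by
      intro n
      have : f (f^[n] (z n)) = f^[n + 1] (z n) := (Function.iterate_succ_apply' f n (z n)).symm
      rw [this, iter_isom hf]
      exact hzd n)
    have h0 := hy 0
    simp only [Function.iterate_zero_apply, hz0] at h0
    have hm := hy m
    rw [hzm m le_rfl, iter_isom hf] at hm
    have htri : dist a b ≤ dist a y + dist y b := dist_triangle a y b
    have e1 : dist a y = dist y a := dist_comm a y
    linarith [h0, hm, htri, e1]
  · -- totally disconnected ⇒ shadowing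
    intro htd
    intro ε hε
    obtain ⟨δ, hδ, hA⟩ := lemA (X := X) hε
    refine ⟨δ, hδ, fun x hx => ⟨x 0, fun n => ?_⟩⟩
    -- chain from x n to f^[n] (x 0)
    have hchain : ∀ n : ℕ,
        Relation.ReflTransGen (fun u v : X => dist u v ≤ δ) (x n) (f^[n] (x 0)) := by
      intro n
      induction n with
      | zero => exact Relation.ReflTransGen.refl
      | succ n ih =>
        have step : dist (x (n + 1)) (f (x n)) ≤ δ := by
          rw [dist_comm]; exact hx n
        have hmap : Relation.ReflTransGen (fun u v : X => dist u v ≤ δ)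
            (f (x n)) (f (f^[n] (x 0))) := by
          refine Relation.ReflTransGen.lift f ?_ _ _ ih
          intro a b hab
          show dist (f a) (f b) ≤ δ
          rw [hf]; exact hab
        have : f (f^[n] (x 0)) = f^[n + 1] (x 0) :=
          (Function.iterate_succ_apply' f n (x 0)).symm
        rw [this] at hmap
        exact (Relation.ReflTransGen.head step hmap)
    have := hA (x n) (f^[n] (x 0)) (hchain n)
    rw [dist_comm] at this
    exact this
end

section
/- Suppose (X, G) is a CR-dynamical system on a non-empty compact metric space (X, d), and suppose there exists an isometry f : X → X with {(x, f(x)) : x ∈ X} ⊆ G. Then: (1) if (X, G) has the (2,1)-shadowing property, then X is totally disconnected; (2) if X is totally disconnected, then (X, G) has the (1,2)-shadowing property. -/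
open Set

/-- `(δ,1)`-pseudo-orbit. -/
def MPO1 {X : Type*} [MetricSpace X] (G : Set (X × X)) (δ : ℝ) (x : ℕ → X) : Prop :=
  (∀ n : ℕ, x n ∈ ndDom G) ∧ ∀ n : ℕ, ∀ y : X, (x n, y) ∈ G → dist y (x (n + 1)) ≤ δ

/-- `(δ,2)`-pseudo-orbit. -/
def MPO2 {X : Type*} [MetricSpace X] (G : Set (X × X)) (δ : ℝ) (x : ℕ → X) : Prop :=
  (∀ n : ℕ, x n ∈ ndDom G) ∧ ∀ n : ℕ, ∃ y : X, (x n, y) ∈ G ∧ dist y (x (n + 1)) ≤ δ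

/-- The legal point `y` `(ε,1)`-shadows the sequence `x`. -/
def MShadows1 {X : Type*} [MetricSpace X] (G : Set (X × X)) (ε : ℝ) (y : X) (x : ℕ → X) : Prop :=
  IsLegal G y ∧ ∀ s : ℕ → X, IsTrajectory G y s → ∀ n : ℕ, dist (x n) (s n) < ε

/-- The point `y` `(ε,2)`-shadows the sequence `x`. -/
def MShadows2 {X : Type*} [MetricSpace X] (G : Set (X × X)) (ε : ℝ) (y : X) (x : ℕ → X) : Prop :=
  ∃ s : ℕ → X, IsTrajectory G y s ∧ ∀ n : ℕ, dist (x n) (s n) < ε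

/-- The `(2,1)`-shadowing property (metric form). -/
def MShadowing21 {X : Type*} [MetricSpace X] (G : Set (X × X)) : Prop :=
  ∀ ε : ℝ, 0 < ε → ∃ δ : ℝ, 0 < δ ∧
    ∀ x : ℕ → X, MPO2 G δ x → ∃ y : X, MShadows1 G ε y x

/-- The `(1,2)`-shadowing property (metric form). -/
def MShadowing12 {X : Type*} [MetricSpace X] (G : Set (X × X)) : Prop :=
  ∀ ε : ℝ, 0 < ε → ∃ δ : ℝ, 0 < δ ∧
    ∀ x : ℕ → X, MPO1 G δ x → ∃ y : X, MShadows2 G ε y x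

/-- for a CR-dynamical system on a compact metric space whose relation
contains the graph of an isometry: (2,1)-shadowing implies X totally disconnected,
and X totally disconnected implies (1,2)-shadowing. -/
theorem stmt_17 {X : Type*} [MetricSpace X] [CompactSpace X] [Nonempty X]
    (G : Set (X × X)) (hGclosed : IsClosed G) (hGne : G.Nonempty)
    (hGpow : ∀ n : ℕ, 1 ≤ n → (relPow G n).Nonempty)
    (f : X → X) (hf : ∀ x y : X, dist (f x) (f y) = dist x y)
    (hgraph : {p : X × X | p.2 = f p.1} ⊆ G) :
    (MShadowing21 G → TotallyDisconnectedSpace X) ∧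
      (TotallyDisconnectedSpace X → MShadowing12 G) := by
  classical
  have hiso : Isometry f := Isometry.of_dist_eq hf
  have hcont : Continuous f := hiso.continuous
  -- iterates of `f` preserve distances
  have hiterd : ∀ (n : ℕ) (p q : X), dist (f^[n] p) (f^[n] q) = dist p q := by
    intro n
    induction n with
    | zero => intro p q; simp
    | succ n ih =>
      intro p q
      rw [Function.iterate_succ_apply', Function.iterate_succ_apply', hf]
      exact ih p q
  have hfG : ∀ p : X, (p, f p) ∈ G := fun p => hgraph rfl
  have htraj : ∀ y : X, IsTrajectory G y (fun n => f^[n] y) := by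
    intro y
    refine ⟨by simp, fun n => ?_⟩
    apply hgraph
    show f^[n + 1] y = f (f^[n] y)
    exact Function.iterate_succ_apply' f n y
  -- an isometry of a compact metric space is surjective
  have hsurj : Function.Surjective f := by
    intro x
    have hrange : IsClosed (Set.range f) := (isCompact_range hcont).isClosed
    have hxcl : x ∈ closure (Set.range f) := by
      rw [Metric.mem_closure_iff]
      intro r hr
      obtain ⟨t, ht⟩ := isCompact_univ.elim_finite_subcover
        (fun c : X => Metric.ball c (r / 2)) (fun _ => Metric.isOpen_ball)
        (fun z _ => Set.mem_iUnion.2 ⟨z, Metric.mem_ball_self (by positivity)⟩)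
      have hsel : ∀ n : ℕ, ∃ c, c ∈ t ∧ f^[n] x ∈ Metric.ball c (r / 2) := by
        intro n
        have := ht (Set.mem_univ (f^[n] x))
        simpa using Set.mem_iUnion₂.1 this
      choose cfun hc1 hc2 using hsel
      obtain ⟨m, n, hmn, hceq⟩ :=
        Finite.exists_ne_map_eq_of_infinite (fun n : ℕ => (⟨cfun n, hc1 n⟩ : {a // a ∈ t}))
      have hce : cfun m = cfun n := congrArg Subtype.val hceq
      have hclose : ∀ m n : ℕ, cfun m = cfun n → dist (f^[m] x) (f^[n] x) < r := by
        intro m n hce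
        have h1 : dist (f^[m] x) (cfun m) < r / 2 := Metric.mem_ball.1 (hc2 m)
        have h2 : dist (f^[n] x) (cfun n) < r / 2 := Metric.mem_ball.1 (hc2 n)
        calc dist (f^[m] x) (f^[n] x) ≤ dist (f^[m] x) (cfun m) + dist (cfun m) (f^[n] x) :=
              dist_triangle _ _ _
          _ < r := by
              have h3 : dist (cfun m) (f^[n] x) < r / 2 := by
                rw [hce, dist_comm]; exact h2
              linarith
      have hkey : ∀ m n : ℕ, m < n → dist (f^[m] x) (f^[n] x) < r →
          ∃ b ∈ Set.range f, dist x b < r := by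
        intro m n hlt hd
        refine ⟨f^[n - m] x, ?_, ?_⟩
        · have hpos : n - m = (n - m - 1) + 1 := by omega
          rw [hpos, Function.iterate_succ_apply']
          exact ⟨_, rfl⟩
        · have : f^[m] (f^[n - m] x) = f^[n] x := by
            rw [← Function.iterate_add_apply]
            congr 1
            omega
          calc dist x (f^[n - m] x) = dist (f^[m] x) (f^[m] (f^[n - m] x)) := (hiterd m _ _).symm
            _ = dist (f^[m] x) (f^[n] x) := by rw [this]
            _ < r := hd
      rcases hmn.lt_or_gt with h | h
      · exact hkey m n h (hclose m n hce)
      · exact hkey n m h (hclose n m hce.symm)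
    rw [hrange.closure_eq] at hxcl
    exact hxcl
  constructor
  · -- (2,1)-shadowing implies totally disconnected
    intro hsh
    refine ⟨fun t _ ht => ?_⟩
    intro a ha b hb
    by_contra hab
    have hdab : 0 < dist a b := dist_pos.2 hab
    set ε : ℝ := dist a b / 2 with hεdef
    have hε : 0 < ε := by positivity
    obtain ⟨δ, hδ, hsb⟩ := hsh ε hε
    set r : X → X → Prop := fun p q => dist p q ≤ δ ∧ q ∈ t with hrdef
    -- every point of `t` is reachable from `a` by a δ-chain in `t`
    have hchain : Relation.ReflTransGen r a b := by
      by_contra hnc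
      set S : Set X := {y | y ∈ t ∧ Relation.ReflTransGen r a y} with hSdef
      have hz := ht (⋃ y ∈ S, Metric.ball y δ) (⋃ y ∈ t \ S, Metric.ball y δ)
        (isOpen_biUnion fun _ _ => Metric.isOpen_ball)
        (isOpen_biUnion fun _ _ => Metric.isOpen_ball)
        (by
          intro y hy
          by_cases hyS : y ∈ S
          · exact Or.inl (Set.mem_biUnion hyS (Metric.mem_ball_self hδ))
          · exact Or.inr (Set.mem_biUnion ⟨hy, hyS⟩ (Metric.mem_ball_self hδ)))
        ⟨a, ha, Set.mem_biUnion ⟨ha, Relation.ReflTransGen.refl⟩ (Metric.mem_ball_self hδ)⟩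
        ⟨b, hb, Set.mem_biUnion ⟨hb, fun hbS => hnc hbS.2⟩ (Metric.mem_ball_self hδ)⟩
      obtain ⟨z, hzt, hzU, hzV⟩ := hz
      obtain ⟨y, hyS, hzy⟩ := Set.mem_iUnion₂.1 hzU
      obtain ⟨w, hwS, hzw⟩ := Set.mem_iUnion₂.1 hzV
      have hzS : Relation.ReflTransGen r a z :=
        hyS.2.tail ⟨le_of_lt (by rw [dist_comm]; exact Metric.mem_ball.1 hzy), hzt⟩
      have hwmem : Relation.ReflTransGen r a w :=
        hzS.tail ⟨le_of_lt (Metric.mem_ball.1 hzw), hwS.1⟩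
      exact hwS.2 ⟨hwS.1, hwmem⟩
    -- turn the chain into a sequence
    have hseq : ∀ b' : X, Relation.ReflTransGen r a b' →
        ∃ k : ℕ, ∃ c : ℕ → X, c 0 = a ∧ (∀ n, k ≤ n → c n = b') ∧
          ∀ n, dist (c n) (c (n + 1)) ≤ δ := by
      intro b' h
      induction h with
      | refl => exact ⟨0, fun _ => a, rfl, fun n _ => rfl, fun n => by simp [hδ.le]⟩
      | @tail m b'' hm hr ih =>
        obtain ⟨k, c, hc0, hck, hcd⟩ := ih
        refine ⟨k + 1, fun n => if n ≤ k then c n else b'', by simp [hc0], ?_, ?_⟩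
        · intro n hn
          simp [Nat.not_le.2 (by omega : k < n)]
        · intro n
          by_cases h1 : n + 1 ≤ k
          · simp only [if_pos (by omega : n ≤ k), if_pos h1]
            exact hcd n
          · by_cases h2 : n ≤ k
            · have hnk : n = k := by omega
              subst hnk
              simpa [h1, hck n le_rfl] using hr.1
            · simp only [if_neg h2, if_neg h1, dist_self]; exact hδ.le
    obtain ⟨k, c, hc0, hck, hcd⟩ := hseq b hchain
    set xs : ℕ → X := fun n => f^[n] (c n) with hxsdef
    have hpo : MPO2 G δ xs := by
      refine ⟨fun n => ⟨f (xs n), hfG _⟩, fun n => ⟨f (xs n), hfG _, ?_⟩⟩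
      show dist (f (f^[n] (c n))) (f^[n + 1] (c (n + 1))) ≤ δ
      rw [← Function.iterate_succ_apply' f n (c n), hiterd]
      exact hcd n
    obtain ⟨y, ⟨_, hysh⟩⟩ := hsb xs hpo
    have h0 : dist a y < ε := by
      have := hysh (fun n => f^[n] y) (htraj y) 0
      simpa [hxsdef, hc0] using this
    have hk : dist b y < ε := by
      have := hysh (fun n => f^[n] y) (htraj y) k
      simp only [hxsdef] at this
      rw [hck k le_rfl, hiterd] at this
      exact this
    have : dist a b ≤ dist a y + dist y b := dist_triangle _ _ _
    rw [dist_comm y b] at this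
    rw [hεdef] at h0 hk
    linarith
  · -- totally disconnected implies (1,2)-shadowing
    intro htd ε hε
    -- clopen pieces of diameter < ε
    have hW : ∀ x : X, ∃ Wx : Set X, IsClopen Wx ∧ x ∈ Wx ∧ Wx ⊆ Metric.ball x (ε / 2) :=
      fun x => compact_exists_isClopen_in_isOpen Metric.isOpen_ball
        (Metric.mem_ball_self (by positivity))
    choose W hWc hWx hWb using hW
    obtain ⟨s, hs⟩ := isCompact_univ.elim_finite_subcover W (fun x => (hWc x).2)
      (fun x _ => Set.mem_iUnion.2 ⟨x, hWx x⟩)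
    set m : ℕ := s.card with hmdef
    set g : Fin m → X := fun i => (s.equivFin.symm i : X) with hgdef
    set V : Fin m → Set X := fun i => W (g i) \ ⋃ (j : Fin m) (_ : j < i), W (g j) with hVdef
    have hVopen : ∀ i, IsOpen (V i) := by
      intro i
      exact (hWc (g i)).2.sdiff
        ((Set.toFinite {j : Fin m | j < i}).isClosed_biUnion fun j _ => (hWc (g j)).1)
    have hVsub : ∀ i, V i ⊆ W (g i) := fun i => Set.diff_subset
    have hVcover : ∀ x : X, ∃ i, x ∈ V i := by
      intro x
      have hx : ∃ i : Fin m, x ∈ W (g i) := by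
        obtain ⟨a, hat, hxa⟩ := Set.mem_iUnion₂.1 (hs (Set.mem_univ x))
        refine ⟨s.equivFin ⟨a, hat⟩, ?_⟩
        simp only [hgdef, Equiv.symm_apply_apply]
        exact hxa
      obtain ⟨i, hPi, hmin⟩ :=
        wellFounded_lt.has_min {i : Fin m | x ∈ W (g i)} hx
      refine ⟨i, hPi, ?_⟩
      intro hmem
      obtain ⟨j, hj⟩ := Set.mem_iUnion.1 hmem
      obtain ⟨hji, hxj⟩ := Set.mem_iUnion.1 hj
      exact hmin j hxj hji
    have hVdisj : ∀ i j (x : X), x ∈ V i → x ∈ V j → i = j := by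
      intro i j x hxi hxj
      rcases lt_trichotomy i j with h | h | h
      · exact (hxj.2 (Set.mem_iUnion.2 ⟨i, Set.mem_iUnion.2 ⟨h, hVsub i hxi⟩⟩)).elim
      · exact h
      · exact (hxi.2 (Set.mem_iUnion.2 ⟨j, Set.mem_iUnion.2 ⟨h, hVsub j hxj⟩⟩)).elim
    have hVsmall : ∀ i (p q : X), p ∈ V i → q ∈ V i → dist p q < ε := by
      intro i p q hp hq
      have h1 : dist p (g i) < ε / 2 := Metric.mem_ball.1 (hWb (g i) (hVsub i hp))
      have h2 : dist q (g i) < ε / 2 := Metric.mem_ball.1 (hWb (g i) (hVsub i hq))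
      calc dist p q ≤ dist p (g i) + dist (g i) q := dist_triangle _ _ _
        _ = dist p (g i) + dist q (g i) := by rw [dist_comm (g i) q]
        _ < ε := by linarith
    obtain ⟨γ, hγ, hleb⟩ := lebesgue_number_lemma_of_metric isCompact_univ hVopen
      (fun x _ => Set.mem_iUnion.2 (hVcover x))
    refine ⟨γ / 2, by positivity, ?_⟩
    rintro x ⟨_, hpo⟩
    have hstep : ∀ n, dist (f (x n)) (x (n + 1)) ≤ γ / 2 := fun n => hpo n (f (x n)) (hfG _)
    obtain ⟨i0, hi0⟩ := hVcover (x 0)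
    have key : ∀ n, ∃ w, f^[n] w = x n ∧ w ∈ V i0 := by
      intro n
      induction n with
      | zero => exact ⟨x 0, rfl, hi0⟩
      | succ n ih =>
        obtain ⟨w, hw, hwV⟩ := ih
        obtain ⟨w', hw'⟩ := (hsurj.iterate (n + 1)) (x (n + 1))
        have hd : dist w' w ≤ γ / 2 := by
          rw [← hiterd (n + 1) w' w, hw', Function.iterate_succ_apply' f n w, hw, dist_comm]
          exact hstep n
        obtain ⟨i, hball⟩ := hleb w (Set.mem_univ w)
        have hwi : w ∈ V i := hball (Metric.mem_ball_self hγ)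
        have hw'i : w' ∈ V i := hball (Metric.mem_ball.2 (lt_of_le_of_lt hd (by linarith)))
        have hii : i = i0 := hVdisj i i0 w hwi hwV
        exact ⟨w', hw', hii ▸ hw'i⟩
    choose w hwf hwV using key
    refine ⟨x 0, fun n => f^[n] (x 0), htraj _, fun n => ?_⟩
    calc dist (x n) (f^[n] (x 0)) = dist (f^[n] (w n)) (f^[n] (x 0)) := by rw [hwf n]
      _ = dist (w n) (x 0) := hiterd n _ _
      _ < ε := hVsmall i0 _ _ (hwV n) hi0
end

section
/- Let (X, G) be a CR-dynamical system on a non-empty compact metric space (X, d), such that there exists an isometry f : X → X with {(x, f(x)) : x ∈ X} ⊆ G. Then X is totally disconnected if and only if the infinite Mahavier product X_G⁺ = {(xₙ)_{n≥0} ∈ Xᵚ : (xₙ, xₙ₊₁) ∈ G for all n}, with the subspace topology inherited from the product topology on Xᵚ, is totally disconnected. -/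
open Set

/-- for a CR-dynamical system on a compact metric space whose relation
contains the graph of an isometry, X is totally disconnected iff the infinite
Mahavier product X_G⁺ is totally disconnected. -/
theorem stmt_19 {X : Type*} [MetricSpace X] [CompactSpace X] [Nonempty X]
    (G : Set (X × X)) (hGclosed : IsClosed G) (hGne : G.Nonempty)
    (hGpow : ∀ n : ℕ, 1 ≤ n → (relPow G n).Nonempty)
    (f : X → X) (hf : ∀ x y : X, dist (f x) (f y) = dist x y)
    (hgraph : {p : X × X | p.2 = f p.1} ⊆ G) :
    TotallyDisconnectedSpace X ↔
      TotallyDisconnectedSpace {s : ℕ → X // ∀ n : ℕ, (s n, s (n + 1)) ∈ G} := by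
  constructor
  · intro h; infer_instance
  · intro h
    have hfc : Continuous f := (Isometry.of_dist_eq fun a b => hf a b).continuous
    set S := {s : ℕ → X // ∀ n : ℕ, (s n, s (n + 1)) ∈ G}
    have hmem : ∀ x : X, ∀ n : ℕ, (f^[n] x, f^[n+1] x) ∈ G := by
      intro x n
      have : f^[n+1] x = f (f^[n] x) := Function.iterate_succ_apply' f n x
      exact hgraph (by simp [this])
    set φ : X → S := fun x => ⟨fun n => f^[n] x, hmem x⟩ with hφ
    have hφc : Continuous φ := by
      apply Continuous.subtype_mk
      exact continuous_pi fun n => hfc.iterate n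
    have hφinj : Function.Injective φ := by
      intro a b hab
      have := congrArg (fun s : S => s.1 0) hab
      simpa [hφ] using this
    constructor
    intro t _ ht
    have h2 : (φ '' t).Subsingleton :=
      isTotallyDisconnected_of_totallyDisconnectedSpace (φ '' t) (φ '' t) subset_rfl
        (ht.image φ hφc.continuousOn)
    intro x hx y hy
    exact hφinj (h2 ⟨x, hx, rfl⟩ ⟨y, hy, rfl⟩)
end
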